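/- arXiv:1306.2240 — 3 statements merged into one kernel-verified Lean document; each statement's English description precedes it below -/
import Mathlib

section
/- Let X be a convex field defined over all of ℍ² that is 0-lipschitz, and let v ∈ ℝ³. Then the set {p ∈ ℍ² : v ∧ p ∈ X(p)} is convex. -/
noncomputable section

/-- Minkowski space `ℝ^{2,1}` as `Fin 3 → ℝ`. -/
abbrev V : Type := Fin 3 → ℝ

/-- The Minkowski form `⟨x|y⟩ = x₁y₁ + x₂y₂ − x₃y₃`. -/
def mink (x y : V) : ℝ := x 0 * y 0 + x 1 * y 1 - x 2 * y 2

/-- The Minkowski cross product. -/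
def mcross (x y : V) : V :=
  ![x 1 * y 2 - x 2 * y 1, x 2 * y 0 - x 0 * y 2, -(x 0 * y 1) + x 1 * y 0]

/-- The hyperbolic plane: upper sheet of the hyperboloid. -/
def H2 : Set V := {p | mink p p = -1 ∧ 0 < p 2}

/-- Inverse hyperbolic cosine. -/
def acosh (x : ℝ) : ℝ := Real.log (x + Real.sqrt (x ^ 2 - 1))

/-- Hyperbolic distance. -/
def hdist (p q : V) : ℝ := acosh (-(mink p q))

/-- Norm of a (spacelike) tangent vector. -/
def mnorm (x : V) : ℝ := Real.sqrt (mink x x)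

/-- The point `exp_p(t x)`. -/
def mexp (p x : V) (t : ℝ) : V :=
  if x = 0 then p
  else Real.cosh (t * mnorm x) • p + (Real.sinh (t * mnorm x) / mnorm x) • x

/-- `d'(x_p, x_q)`: the derivative at `t = 0` of `t ↦ d(exp_p(t x_p), exp_q(t x_q))`. -/
def dprime (p xp q xq : V) : ℝ :=
  deriv (fun t => hdist (mexp p xp t) (mexp q xq t)) 0

/-- A convex field on `ℍ²`. -/
def IsConvexField (X : Set (V × V)) : Prop :=
  IsClosed X ∧ (∀ px ∈ X, px.1 ∈ H2 ∧ mink px.2 px.1 = 0) ∧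
    ∀ p : V, Convex ℝ {x : V | (p, x) ∈ X}

/-- The fiber `X(p)` of a convex field. -/
def fiberAt (X : Set (V × V)) (p : V) : Set V := {x | (p, x) ∈ X}

/-- A convex field is defined over `A` if all fibers over `A` are nonempty. -/
def DefinedOver (X : Set (V × V)) (A : Set V) : Prop := ∀ p ∈ A, (fiberAt X p).Nonempty

/-- A convex field is `k`-lipschitz. -/
def LipschitzField (k : ℝ) (X : Set (V × V)) : Prop :=
  ∀ p xp q xq, (p, xp) ∈ X → (q, xq) ∈ X → p ≠ q → dprime p xp q xq ≤ k * hdist p q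

/-- A (continuous) vector field on `ℍ²`. -/
def IsVectorField (X : V → V) : Prop := ContinuousOn X H2 ∧ ∀ p ∈ H2, mink (X p) p = 0

/-- A vector field is `k`-lipschitz. -/
def LipschitzVF (k : ℝ) (X : V → V) : Prop :=
  ∀ p ∈ H2, ∀ q ∈ H2, p ≠ q → dprime p (X p) q (X q) ≤ k * hdist p q

/-- Hyperbolic convexity of a subset of `ℍ²`. -/
def HConvex (C : Set V) : Prop :=
  ∀ p ∈ C, ∀ q ∈ C, ∀ m ∈ H2, hdist p m + hdist m q = hdist p q → m ∈ C

/-- Hyperbolic convex hull. -/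
def hconvexHull (A : Set V) : Set V := ⋂₀ {C : Set V | A ⊆ C ∧ C ⊆ H2 ∧ HConvex C}

/-- Interior of a subset of `ℍ²` relative to `ℍ²`. -/
def relInterior (A : Set V) : Set V :=
  {p | p ∈ H2 ∧ ∃ O : Set V, IsOpen O ∧ p ∈ O ∧ O ∩ H2 ⊆ A}

/-- Linear automorphisms of `ℝ³`, a group under composition. -/
abbrev GL3 : Type := V ≃ₗ[ℝ] V

/-- Membership in `G₀`: preserves the Minkowski form, determinant one, preserves `ℍ²`. -/
def InG0 (g : GL3) : Prop :=
  (∀ x y : V, mink (g x) (g y) = mink x y) ∧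
    LinearMap.det g.toLinearMap = 1 ∧ ∀ p ∈ H2, g p ∈ H2

/-- Properly discontinuous action on (a subset of) a topological space. -/
def ProperlyDiscOn {Γ α : Type*} [TopologicalSpace α] (act : Γ → α → α) (S : Set α) : Prop :=
  ∀ K L : Set α, K ⊆ S → L ⊆ S → IsCompact K → IsCompact L →
    {γ : Γ | (act γ '' K ∩ L).Nonempty}.Finite

/-- A `j`-cocycle. -/
def IsCocycle {Γ : Type*} [Group Γ] (j : Γ →* GL3) (u : Γ → V) : Prop :=
  ∀ γ₁ γ₂ : Γ, u (γ₁ * γ₂) = u γ₁ + j γ₁ (u γ₂)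

/-- Convex cocompact homomorphism. -/
def ConvexCocompact {Γ : Type*} [Group Γ] (j : Γ →* GL3) : Prop :=
  Function.Injective j ∧
    ProperlyDiscOn (fun (γ : Γ) (p : V) => j γ p) H2 ∧
    ∃ C K : Set V, C.Nonempty ∧ IsClosed C ∧ C ⊆ H2 ∧ HConvex C ∧
      (∀ γ : Γ, j γ '' C = C) ∧ IsCompact K ∧ C ⊆ ⋃ γ : Γ, j γ '' K

/-- The convex core of `j`. -/
def ConvexCore {Γ : Type*} [Group Γ] (j : Γ →* GL3) : Set V :=
  ⋂₀ {C : Set V | C.Nonempty ∧ IsClosed C ∧ C ⊆ H2 ∧ HConvex C ∧ ∀ γ : Γ, j γ '' C = C}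

/-- `(j,u)`-equivariance of a convex field. -/
def EquivField {Γ : Type*} [Group Γ] (j : Γ →* GL3) (u : Γ → V) (X : Set (V × V)) : Prop :=
  ∀ (γ : Γ), ∀ p ∈ H2,
    fiberAt X (j γ p) = (fun x => j γ x + mcross (u γ) (j γ p)) '' fiberAt X p

/-- `(j,u)`-equivariance of a vector field. -/
def EquivVF {Γ : Type*} [Group Γ] (j : Γ →* GL3) (u : Γ → V) (X : V → V) : Prop :=
  ∀ (γ : Γ), ∀ p ∈ H2, X (j γ p) = j γ (X p) + mcross (u γ) (j γ p)

/-- Translation length `λ(g) = inf_{p ∈ ℍ²} d(p, g·p)`. -/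
def transLength (g : V → V) : ℝ := sInf ((fun p => hdist p (g p)) '' H2)

/-- A transformation is hyperbolic if its translation length is positive. -/
def IsHyperbolic (g : V → V) : Prop := 0 < transLength g

/-- `cross(v)` as a linear map `w ↦ v ∧ w`. -/
def crossLM (v : V) : V →ₗ[ℝ] V where
  toFun w := mcross v w
  map_add' w₁ w₂ := by
    funext i
    fin_cases i <;>
      simp [mcross, Pi.add_apply] <;> ring
  map_smul' c w := by
    funext i
    fin_cases i <;>
      simp [mcross, Pi.smul_apply, smul_eq_mul] <;> ring

/-- `cross(v)` as a continuous linear map. -/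
def crossCLM (v : V) : V →L[ℝ] V := LinearMap.toContinuousLinearMap (crossLM v)

/-- A geodesic line of `ℍ²`. -/
def IsGeodesicLine (ℓ : Set V) : Prop :=
  ∃ a ∈ H2, ∃ b ∈ H2, a ≠ b ∧ ℓ = {m ∈ H2 | mink m (mcross a b) = 0}

/-- A `j(Γ)`-invariant geodesic lamination in the convex core. -/
def IsLamination {Γ : Type*} [Group Γ] (j : Γ →* GL3) (L : Set (Set V)) : Prop :=
  L.Nonempty ∧
  (∀ ℓ ∈ L, IsGeodesicLine ℓ ∧ ℓ ⊆ ConvexCore j) ∧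
  (∀ ℓ₁ ∈ L, ∀ ℓ₂ ∈ L, ℓ₁ ≠ ℓ₂ → ℓ₁ ∩ ℓ₂ = ∅) ∧
  IsClosed (⋃₀ L) ∧
  ∀ (γ : Γ), ∀ ℓ ∈ L, j γ '' ℓ ∈ L

/-- The geodesic flow on the tangent bundle. -/
def gflow (t : ℝ) (px : V × V) : V × V :=
  if px.2 = 0 then px
  else (mexp px.1 px.2 t,
    (mnorm px.2 * Real.sinh (t * mnorm px.2)) • px.1 + Real.cosh (t * mnorm px.2) • px.2)

/-- Parallel transport from `p` to `q` along the geodesic. -/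
def ptransport (p q x : V) : V := x + (mink x q / (1 - mink p q)) • (p + q)


namespace Stmt10

lemma mink_comm (x y : V) : mink x y = mink y x := by simp [mink]; ring

lemma mink_add_left (x y z : V) : mink (x + y) z = mink x z + mink y z := by
  simp [mink, Pi.add_apply]; ring

lemma mink_sub_left (x y z : V) : mink (x - y) z = mink x z - mink y z := by
  simp [mink, Pi.sub_apply]; ring

lemma mink_smul_left (c : ℝ) (x z : V) : mink (c • x) z = c * mink x z := by
  simp [mink, Pi.smul_apply, smul_eq_mul]; ring

lemma mink_add_right (x y z : V) : mink z (x + y) = mink z x + mink z y := by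
  simp [mink, Pi.add_apply]; ring

lemma mink_smul_right (c : ℝ) (x z : V) : mink z (c • x) = c * mink z x := by
  simp [mink, Pi.smul_apply, smul_eq_mul]; ring

/-- reverse Cauchy-Schwarz -/
lemma one_le_neg_mink {p q : V} (hp : p ∈ H2) (hq : q ∈ H2) : 1 ≤ -mink p q := by
  obtain ⟨hp1, hp2⟩ := hp
  obtain ⟨hq1, hq2⟩ := hq
  simp only [mink] at hp1 hq1 ⊢
  nlinarith [sq_nonneg (p 0 * q 2 - q 0 * p 2), sq_nonneg (p 1 * q 2 - q 1 * p 2),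
    sq_nonneg (p 0 * q 1 - p 1 * q 0), mul_pos hp2 hq2, sq_nonneg (p 2 - q 2),
    sq_nonneg (p 0 - q 0), sq_nonneg (p 1 - q 1), sq_nonneg (p 2 + q 2)]

lemma eq_of_mink_eq {p q : V} (hp : p ∈ H2) (hq : q ∈ H2) (h : -mink p q = 1) : p = q := by
  obtain ⟨hp1, hp2⟩ := hp
  obtain ⟨hq1, hq2⟩ := hq
  simp only [mink] at hp1 hq1 h
  have h0 : p 0 = q 0 := by
    nlinarith [sq_nonneg (p 0 * q 2 - q 0 * p 2), sq_nonneg (p 1 * q 2 - q 1 * p 2),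
      sq_nonneg (p 0 * q 1 - p 1 * q 0), mul_pos hp2 hq2, sq_nonneg (p 0 - q 0),
      sq_nonneg (p 1 - q 1), sq_nonneg (p 2 - q 2), sq_nonneg (p 2 + q 2)]
  have h1 : p 1 = q 1 := by
    nlinarith [sq_nonneg (p 0 * q 2 - q 0 * p 2), sq_nonneg (p 1 * q 2 - q 1 * p 2),
      sq_nonneg (p 0 * q 1 - p 1 * q 0), mul_pos hp2 hq2, sq_nonneg (p 0 - q 0),
      sq_nonneg (p 1 - q 1), sq_nonneg (p 2 - q 2), sq_nonneg (p 2 + q 2)]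
  have h2 : p 2 = q 2 := by nlinarith [mul_pos hp2 hq2]
  funext i; fin_cases i <;> assumption

lemma one_lt_neg_mink {p q : V} (hp : p ∈ H2) (hq : q ∈ H2) (hne : p ≠ q) :
    1 < -mink p q := by
  rcases lt_or_eq_of_le (one_le_neg_mink hp hq) with h | h
  · exact h
  · exact absurd (eq_of_mink_eq hp hq h.symm) hne

/-- tangent vectors are spacelike -/
lemma tangent_spacelike {p x : V} (hp : p ∈ H2) (hx : mink x p = 0) (hx0 : x ≠ 0) :
    0 < mink x x := by
  obtain ⟨hp1, hp2⟩ := hp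
  simp only [mink] at hp1 hx ⊢
  have hxx : x 2 * p 2 = x 0 * p 0 + x 1 * p 1 := by linarith
  have hx01 : 0 < x 0 ^ 2 + x 1 ^ 2 := by
    rcases eq_or_ne (x 0) 0 with h0 | h0
    · rcases eq_or_ne (x 1) 0 with h1 | h1
      · exfalso
        rw [h0, h1] at hxx
        have h2 : x 2 = 0 := by
          have := hxx
          simp only [zero_mul, add_zero] at this
          rcases mul_eq_zero.1 (by linarith : x 2 * p 2 = 0) with h | h
          · exact h
          · exact absurd h (ne_of_gt hp2)
        exact hx0 (funext fun i => by fin_cases i <;> simp [h0, h1, h2])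
      · have := sq_pos_of_ne_zero h1
        positivity
    · have := sq_pos_of_ne_zero h0
      positivity
  have hxx2 : (x 2 * p 2) ^ 2 = (x 0 * p 0 + x 1 * p 1) ^ 2 := by rw [hxx]
  have key : (x 0 ^ 2 + x 1 ^ 2 - x 2 ^ 2) * p 2 ^ 2 > 0 := by
    nlinarith [sq_nonneg (x 0 * p 1 - x 1 * p 0), hxx2, hx01, hp1]
  nlinarith [sq_nonneg (p 2), mul_pos hp2 hp2]

end Stmt10
namespace Stmt10
lemma mink_sub_right (x y z : V) : mink z (x - y) = mink z x - mink z y := by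
  simp [mink, Pi.sub_apply]; ring
end Stmt10
namespace Stmt10

lemma sqrt_sq_sub_one {x : ℝ} (hx : 1 ≤ x) :
    Real.sqrt (x ^ 2 - 1) * Real.sqrt (x ^ 2 - 1) = x ^ 2 - 1 :=
  Real.mul_self_sqrt (by nlinarith)

lemma acosh_pos_arg {x : ℝ} (hx : 1 ≤ x) : 1 ≤ x + Real.sqrt (x ^ 2 - 1) := by
  have := Real.sqrt_nonneg (x ^ 2 - 1); linarith

lemma cosh_acosh {x : ℝ} (hx : 1 ≤ x) : Real.cosh (acosh x) = x := by
  have h1 : (1:ℝ) ≤ x + Real.sqrt (x ^ 2 - 1) := acosh_pos_arg hx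
  have h0 : (0:ℝ) < x + Real.sqrt (x ^ 2 - 1) := by linarith
  rw [acosh, Real.cosh_eq, Real.exp_log h0, Real.exp_neg, Real.exp_log h0]
  have hs := sqrt_sq_sub_one hx
  have hinv : (x + Real.sqrt (x ^ 2 - 1))⁻¹ = x - Real.sqrt (x ^ 2 - 1) := by
    rw [inv_eq_iff_eq_inv, eq_comm, inv_eq_iff_eq_inv] at *
    field_simp
    nlinarith
  rw [hinv]; ring

lemma sinh_acosh {x : ℝ} (hx : 1 ≤ x) : Real.sinh (acosh x) = Real.sqrt (x ^ 2 - 1) := by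
  have h1 : (1:ℝ) ≤ x + Real.sqrt (x ^ 2 - 1) := acosh_pos_arg hx
  have h0 : (0:ℝ) < x + Real.sqrt (x ^ 2 - 1) := by linarith
  rw [acosh, Real.sinh_eq, Real.exp_log h0, Real.exp_neg, Real.exp_log h0]
  have hs := sqrt_sq_sub_one hx
  have hinv : (x + Real.sqrt (x ^ 2 - 1))⁻¹ = x - Real.sqrt (x ^ 2 - 1) := by
    rw [inv_eq_iff_eq_inv, eq_comm, inv_eq_iff_eq_inv] at *
    field_simp
    nlinarith
  rw [hinv]; ring

lemma acosh_nonneg {x : ℝ} (hx : 1 ≤ x) : 0 ≤ acosh x :=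
  Real.log_nonneg (acosh_pos_arg hx)

lemma eq_one_of_acosh_eq_zero {x : ℝ} (hx : 1 ≤ x) (h : acosh x = 0) : x = 1 := by
  have h0 : (0:ℝ) < x + Real.sqrt (x ^ 2 - 1) := by
    have := acosh_pos_arg hx; linarith
  have := Real.log_eq_zero.1 h
  rcases this with h' | h' | h'
  · linarith
  · have hs := Real.sqrt_nonneg (x ^ 2 - 1); linarith
  · have hs := Real.sqrt_nonneg (x ^ 2 - 1); linarith

/-- triple product vanishing -/
lemma mink_mcross_self (v p : V) : mink (mcross v p) p = 0 := by
  simp [mink, mcross]; ring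

lemma mink_mcross_antisym (v p q : V) : mink (mcross v p) q = -mink (mcross v q) p := by
  simp [mink, mcross]; ring

lemma mcross_add_right (v x y : V) : mcross v (x + y) = mcross v x + mcross v y := by
  funext i; fin_cases i <;> simp [mcross, Pi.add_apply] <;> ring

lemma mcross_smul_right (v : V) (c : ℝ) (x : V) : mcross v (c • x) = c • mcross v x := by
  funext i; fin_cases i <;> simp [mcross, Pi.smul_apply, smul_eq_mul] <;> ring

/-- double cross product identity -/
lemma mcross_mcross (z a b : V) :
    mcross z (mcross a b) = mink z a • b - mink z b • a := by
  funext i; fin_cases i <;>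
    simp [mcross, mink, Pi.sub_apply, Pi.smul_apply, smul_eq_mul] <;> ring

lemma mink_mcross_mcross (a b : V) :
    mink (mcross a b) (mcross a b) = mink a b ^ 2 - mink a a * mink b b := by
  simp [mink, mcross]; ring

end Stmt10
namespace Stmt10

lemma mink_mcross_self' (v p : V) : mink (mcross v p) v = 0 := by
  simp [mink, mcross]; ring

lemma smul_eq_of_orth {z a b : V} (ha : mink z a = 0) (hb : mink z b = 0) :
    mink (mcross a b) (mcross a b) • z = mink z (mcross a b) • mcross a b := by
  have h1 : mcross z (mcross a b) = 0 := by
    rw [mcross_mcross, ha, hb]; simp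
  have h2 := mcross_mcross (mcross a b) z (mcross a b)
  rw [h1] at h2
  have h0 : mcross (mcross a b) 0 = 0 := by
    funext i; fin_cases i <;> simp [mcross]
  rw [h0] at h2
  rw [mink_comm z (mcross a b)]
  linear_combination (norm := module) h2

/-- expansion in an orthonormal basis m, h, mcross m h -/
lemma expansion {m h : V} (hm : mink m m = -1) (hh : mink h h = 1) (hmh : mink h m = 0)
    (y : V) :
    y = (-(mink y m)) • m + mink y h • h + mink y (mcross m h) • mcross m h := by
  have hmh2 : mink m h = 0 := by rw [mink_comm]; exact hmh
  set h' := mcross m h with hh'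
  have hn : mink h' h' = 1 := by
    rw [hh', mink_mcross_mcross, hm, hh, mink_comm m h, hmh]; ring
  set z := y + mink y m • m - mink y h • h with hz
  have hzm : mink z m = 0 := by
    rw [hz, mink_sub_left, mink_add_left, mink_smul_left, mink_smul_left]
    simp only [hm, hh, hmh, hmh2]; ring
  have hzh : mink z h = 0 := by
    rw [hz, mink_sub_left, mink_add_left, mink_smul_left, mink_smul_left]
    simp only [hm, hh, hmh, hmh2]; ring
  have key := smul_eq_of_orth hzm hzh
  rw [← hh', hn, one_smul] at key
  have hzh' : mink z h' = mink y h' := by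
    rw [hz, mink_sub_left, mink_add_left, mink_smul_left, mink_smul_left]
    rw [mink_comm m h', mink_comm h h', hh', mink_mcross_self, mink_mcross_self']
    ring
  rw [hzh'] at key
  rw [hz] at key
  linear_combination (norm := module) key

end Stmt10
namespace Stmt10

lemma mexp_zero (p x : V) : mexp p x 0 = p := by
  unfold mexp
  split
  · rfl
  · funext i
    simp [Pi.add_apply, Pi.smul_apply, smul_eq_mul]

lemma hasDerivAt_mexp_apply {p x : V} (hp : p ∈ H2) (hx : mink x p = 0) (i : Fin 3) :
    HasDerivAt (fun t => mexp p x t i) (x i) 0 := by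
  rcases eq_or_ne x 0 with h0 | h0
  · simp only [mexp, h0, if_pos rfl]
    simpa [h0] using (hasDerivAt_const (0:ℝ) (p i))
  · have hsp : 0 < mink x x := tangent_spacelike hp hx h0
    have ha : 0 < mnorm x := Real.sqrt_pos.2 hsp
    simp only [mexp, if_neg h0]
    set a := mnorm x with haa
    have hc : HasDerivAt (fun t : ℝ => Real.cosh (t * a)) 0 0 := by
      simpa using ((hasDerivAt_id (0:ℝ)).mul_const a).cosh
    have hs : HasDerivAt (fun t : ℝ => Real.sinh (t * a)) a 0 := by
      simpa using ((hasDerivAt_id (0:ℝ)).mul_const a).sinh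
    have h1 : HasDerivAt (fun t : ℝ => Real.cosh (t * a) * p i + Real.sinh (t * a) / a * x i)
        (0 * p i + a / a * x i) 0 :=
      (hc.mul_const (p i)).add ((hs.div_const a).mul_const (x i))
    have h2 : 0 * p i + a / a * x i = x i := by
      field_simp
      ring
    rw [h2] at h1
    exact h1

lemma hasDerivAt_mink_mexp {p xp q xq : V} (hp : p ∈ H2) (hq : q ∈ H2)
    (hxp : mink xp p = 0) (hxq : mink xq q = 0) :
    HasDerivAt (fun t => mink (mexp p xp t) (mexp q xq t)) (mink xp q + mink xq p) 0 := by
  have hu0 := hasDerivAt_mexp_apply hp hxp (0 : Fin 3)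
  have hu1 := hasDerivAt_mexp_apply hp hxp (1 : Fin 3)
  have hu2 := hasDerivAt_mexp_apply hp hxp (2 : Fin 3)
  have hw0 := hasDerivAt_mexp_apply hq hxq (0 : Fin 3)
  have hw1 := hasDerivAt_mexp_apply hq hxq (1 : Fin 3)
  have hw2 := hasDerivAt_mexp_apply hq hxq (2 : Fin 3)
  have h := (((hu0.mul hw0).add (hu1.mul hw1)).sub (hu2.mul hw2))
  rw [mexp_zero, mexp_zero] at h
  refine HasDerivAt.congr_deriv h ?_
  simp only [mink]
  ring

lemma dprime_eq {p xp q xq : V} (hp : p ∈ H2) (hq : q ∈ H2) (hpq : p ≠ q)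
    (hxp : mink xp p = 0) (hxq : mink xq q = 0) :
    dprime p xp q xq
      = -(mink xp q + mink xq p) / Real.sqrt ((mink p q) ^ 2 - 1) := by
  set C : ℝ := -(mink p q) with hC
  have hC1 : 1 < C := one_lt_neg_mink hp hq hpq
  have hCsq : 0 < C ^ 2 - 1 := by nlinarith
  set s : ℝ := Real.sqrt (C ^ 2 - 1) with hs
  have hs0 : 0 < s := Real.sqrt_pos.2 hCsq
  have hss : s * s = C ^ 2 - 1 := Real.mul_self_sqrt (le_of_lt hCsq)
  have hG : HasDerivAt (fun t => -(mink (mexp p xp t) (mexp q xq t)))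
      (-(mink xp q + mink xq p)) 0 := (hasDerivAt_mink_mexp hp hq hxp hxq).neg
  have hG0 : -(mink (mexp p xp 0) (mexp q xq 0)) = C := by rw [mexp_zero, mexp_zero]
  -- derivative of acosh at C
  have h1 : HasDerivAt (fun y : ℝ => y ^ 2 - 1) (2 * C) C := by
    simpa using (hasDerivAt_pow 2 C).sub_const 1
  have h2 : HasDerivAt (fun y : ℝ => Real.sqrt (y ^ 2 - 1)) (2 * C / (2 * s)) C :=
    h1.sqrt (ne_of_gt hCsq)
  have h3 : HasDerivAt (fun y : ℝ => y + Real.sqrt (y ^ 2 - 1)) (1 + 2 * C / (2 * s)) C :=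
    (hasDerivAt_id C).add h2
  have hpos : 0 < C + s := by linarith
  have h4 : HasDerivAt (fun y : ℝ => Real.log (y + Real.sqrt (y ^ 2 - 1)))
      ((1 + 2 * C / (2 * s)) / (C + s)) C := h3.log (ne_of_gt hpos)
  have h5 : (1 + 2 * C / (2 * s)) / (C + s) = 1 / s := by
    field_simp
    nlinarith
  rw [h5] at h4
  have h6 : HasDerivAt (fun t => hdist (mexp p xp t) (mexp q xq t))
      (-(mink xp q + mink xq p) * (1 / s)) 0 := by
    have h4' : HasDerivAt (fun y : ℝ => Real.log (y + Real.sqrt (y ^ 2 - 1))) (1 / s)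
        ((fun t => -(mink (mexp p xp t) (mexp q xq t))) 0) := by
      have : ((fun t => -(mink (mexp p xp t) (mexp q xq t))) 0) = C := by
        simp only [mexp_zero]
        exact hC.symm
      rw [this]
      exact h4
    have hcomp := h4'.comp 0 hG
    have : (fun t => hdist (mexp p xp t) (mexp q xq t))
        = (fun y : ℝ => Real.log (y + Real.sqrt (y ^ 2 - 1)))
          ∘ (fun t => -(mink (mexp p xp t) (mexp q xq t))) := by
      funext t; simp [hdist, acosh, Function.comp]
    rw [this]
    refine HasDerivAt.congr_deriv hcomp ?_
    ring
  have hsq : (mink p q) ^ 2 = C ^ 2 := by rw [hC]; ring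
  rw [dprime, h6.deriv, hsq]
  field_simp
  rfl

lemma pair_key {X : Set (V × V)} (hX : IsConvexField X) (hlip : LipschitzField 0 X)
    {p xp q xq : V} (hp : (p, xp) ∈ X) (hq : (q, xq) ∈ X) :
    0 ≤ mink xp q + mink xq p := by
  obtain ⟨hcl, hmem, hconv⟩ := hX
  have hpH := (hmem _ hp).1
  have hqH := (hmem _ hq).1
  have hxp := (hmem _ hp).2
  have hxq := (hmem _ hq).2
  rcases eq_or_ne p q with rfl | hne
  · simp [hxp, hxq]
  · have hd := hlip p xp q xq hp hq hne
    rw [dprime_eq hpH hqH hne hxp hxq, zero_mul] at hd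
    have hC1 : 1 < -(mink p q) := one_lt_neg_mink hpH hqH hne
    have hCsq : 0 < (mink p q) ^ 2 - 1 := by nlinarith
    have hs0 : 0 < Real.sqrt ((mink p q) ^ 2 - 1) := Real.sqrt_pos.2 hCsq
    by_contra hlt
    push_neg at hlt
    have : 0 < -(mink xp q + mink xq p) / Real.sqrt ((mink p q) ^ 2 - 1) :=
      div_pos (by linarith) hs0
    linarith

end Stmt10
namespace Stmt10

lemma between_comb {p q m : V} (hp : p ∈ H2) (hq : q ∈ H2) (hm : m ∈ H2)
    (hmp : m ≠ p) (hmq : m ≠ q)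
    (hsum : hdist p m + hdist m q = hdist p q) :
    ∃ c₁ c₂ : ℝ, 0 < c₁ ∧ 0 < c₂ ∧ m = c₁ • p + c₂ • q := by
  set A : ℝ := -(mink p m) with hA
  set B : ℝ := -(mink m q) with hB
  set C : ℝ := -(mink p q) with hCdef
  have hA1 : 1 < A := one_lt_neg_mink hp hm (fun h => hmp h.symm)
  have hB1 : 1 < B := one_lt_neg_mink hm hq hmq
  have hC1 : 1 ≤ C := one_le_neg_mink hp hq
  set sA : ℝ := Real.sqrt (A ^ 2 - 1) with hsA
  set sB : ℝ := Real.sqrt (B ^ 2 - 1) with hsB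
  have hsA0 : 0 < sA := Real.sqrt_pos.2 (by nlinarith)
  have hsB0 : 0 < sB := Real.sqrt_pos.2 (by nlinarith)
  have hsA2 : sA ^ 2 = A ^ 2 - 1 := Real.sq_sqrt (by nlinarith)
  have hsB2 : sB ^ 2 = B ^ 2 - 1 := Real.sq_sqrt (by nlinarith)
  have hC : C = A * B + sA * sB := by
    have h1 : acosh C = acosh A + acosh B := by
      rw [hdist, hdist, hdist, ← hA, ← hB, ← hCdef] at hsum
      exact hsum.symm
    have h2 := cosh_acosh hC1
    rw [h1, Real.cosh_add, cosh_acosh (le_of_lt hA1), cosh_acosh (le_of_lt hB1),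
      sinh_acosh (le_of_lt hA1), sinh_acosh (le_of_lt hB1)] at h2
    rw [← h2, ← hsA, ← hsB]
  set D : ℝ := sA * B + A * sB with hD
  have hD0 : 0 < D := by positivity
  refine ⟨sB / D, sA / D, div_pos hsB0 hD0, div_pos hsA0 hD0, ?_⟩
  set c₁ : ℝ := sB / D with hc₁
  set c₂ : ℝ := sA / D with hc₂
  have e1 : sB + sA * C = A * D := by
    rw [hC, hD]; linear_combination sB * hsA2
  have e2 : sA + sB * C = B * D := by
    rw [hC, hD]; linear_combination sA * hsB2
  have e3 : sB * A + sA * B = D := by rw [hD]; ring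
  have hc1e : c₁ * D = sB := by rw [hc₁]; field_simp
  have hc2e : c₂ * D = sA := by rw [hc₂]; field_simp
  have e1' : c₁ + c₂ * C = A := by
    have h := e1
    rw [← hc1e, ← hc2e] at h
    exact mul_right_cancel₀ (ne_of_gt hD0) (show (c₁ + c₂ * C) * D = A * D by linear_combination h)
  have e2' : c₁ * C + c₂ = B := by
    have h := e2
    rw [← hc1e, ← hc2e] at h
    exact mul_right_cancel₀ (ne_of_gt hD0) (show (c₁ * C + c₂) * D = B * D by linear_combination h)
  have e3' : c₁ * A + c₂ * B = 1 := by
    have h := e3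
    rw [← hc1e, ← hc2e] at h
    exact mul_right_cancel₀ (ne_of_gt hD0) (show (c₁ * A + c₂ * B) * D = 1 * D by linear_combination h)
  set z : V := m - c₁ • p - c₂ • q with hz
  have expandL : ∀ y : V, mink z y = mink m y - c₁ * mink p y - c₂ * mink q y := by
    intro y
    rw [hz, mink_sub_left, mink_sub_left, mink_smul_left, mink_smul_left]
  have expandR : ∀ y : V, mink y z = mink y m - c₁ * mink y p - c₂ * mink y q := by
    intro y
    rw [hz, mink_sub_right, mink_sub_right, mink_smul_right, mink_smul_right]
  have hzp : mink z p = 0 := by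
    rw [expandL p, hp.1, mink_comm q p]
    have h1 : mink m p = -A := by rw [mink_comm, hA]; ring
    have h2 : mink p q = -C := by rw [hCdef]; ring
    rw [h1, h2]; linarith [e1']
  have hzq : mink z q = 0 := by
    rw [expandL q, hq.1]
    have h1 : mink m q = -B := by rw [hB]; ring
    have h2 : mink p q = -C := by rw [hCdef]; ring
    rw [h1, h2]; linarith [e2']
  have hzm : mink z m = 0 := by
    rw [expandL m, hm.1]
    have h1 : mink p m = -A := by rw [hA]; ring
    have h2 : mink q m = -B := by rw [mink_comm, hB]; ring
    rw [h1, h2]; linarith [e3']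
  have hzz : mink z z = 0 := by
    rw [expandR z, hzm, hzp, hzq]; ring
  have hz0 : z = 0 := by
    by_contra h0
    exact absurd hzz (ne_of_gt (tangent_spacelike hp hzp h0))
  have hfin : m - c₁ • p - c₂ • q = 0 := by rw [← hz]; exact hz0
  linear_combination (norm := module) hfin

end Stmt10
namespace Stmt10

lemma sinh_pos_of_pos {t : ℝ} (ht : 0 < t) : 0 < Real.sinh t := by
  have := Real.sinh_lt_sinh.2 ht
  simpa using this

lemma geodesic_mem {m h : V} (hm : m ∈ H2) (hhm : mink h m = 0) (hhh : mink h h = 1)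
    (t : ℝ) : Real.cosh t • m + Real.sinh t • h ∈ H2 := by
  obtain ⟨hm1, hm2⟩ := hm
  have hcs := Real.cosh_sq_sub_sinh_sq t
  constructor
  · simp only [mink, Pi.add_apply, Pi.smul_apply, smul_eq_mul] at hm1 hhh hhm ⊢
    linear_combination (Real.cosh t ^ 2) * hm1 + (2 * Real.cosh t * Real.sinh t) * hhm
      + (Real.sinh t ^ 2) * hhh - hcs
  · have hb : (h 2) ^ 2 ≤ (m 2) ^ 2 - 1 := by
      simp only [mink] at hm1 hhh hhm
      have e3 : (h 2 * m 2) ^ 2 = (h 0 * m 0 + h 1 * m 1) ^ 2 := by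
        linear_combination -(h 0 * m 0 + h 1 * m 1 + h 2 * m 2) * hhm
      have e4 : (h 0 ^ 2 + h 1 ^ 2) * (m 0 ^ 2 + m 1 ^ 2)
          = (1 + h 2 ^ 2) * (m 2 ^ 2 - 1) := by
        have e1 : h 0 ^ 2 + h 1 ^ 2 = 1 + h 2 ^ 2 := by linear_combination hhh
        have e2 : m 0 ^ 2 + m 1 ^ 2 = m 2 ^ 2 - 1 := by linear_combination hm1
        rw [e1, e2]
      have key : (1 + h 2 ^ 2) * (m 2 ^ 2 - 1) - (h 2 * m 2) ^ 2
          = (h 0 * m 1 - h 1 * m 0) ^ 2 := by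
        linear_combination -e4 - e3
      nlinarith [key, sq_nonneg (h 0 * m 1 - h 1 * m 0)]
    have hA : ((Real.cosh t • m + Real.sinh t • h) 2)
        = Real.cosh t * m 2 + Real.sinh t * h 2 := by
      simp [Pi.add_apply, Pi.smul_apply, smul_eq_mul]
    rw [hA]
    have hcs := Real.cosh_sq_sub_sinh_sq t
    have hc := Real.cosh_pos t
    have hprod : 0 < (Real.cosh t * m 2 + Real.sinh t * h 2)
        * (Real.cosh t * m 2 - Real.sinh t * h 2) := by
      nlinarith [sq_nonneg (Real.sinh t), sq_nonneg (h 2), mul_pos hc hm2]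
    have hsum : 0 < (Real.cosh t * m 2 + Real.sinh t * h 2)
        + (Real.cosh t * m 2 - Real.sinh t * h 2) := by
      nlinarith [mul_pos hc hm2]
    nlinarith [hprod, hsum]

/-- dual tangent vector to a continuous linear functional at m -/
lemma exists_dual {m : V} (hm : m ∈ H2) (f : V →L[ℝ] ℝ) :
    ∃ h₀ : V, mink h₀ m = 0 ∧ ∀ y : V, mink y m = 0 → mink y h₀ = f y := by
  set wf : V := ![f (Pi.single 0 1), f (Pi.single 1 1), -(f (Pi.single 2 1))] with hwf
  have hfy : ∀ y : V, f y = mink y wf := by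
    intro y
    have hy : y = y 0 • (Pi.single 0 1 : V) + y 1 • (Pi.single 1 1 : V)
        + y 2 • (Pi.single 2 1 : V) := by
      funext j
      fin_cases j <;> simp [Pi.single_apply]
    rw [hy]
    simp only [map_add, map_smul, smul_eq_mul]
    rw [← hy]
    simp only [hwf, mink, Matrix.cons_val_zero, Matrix.cons_val_one, Matrix.head_cons,
      Matrix.cons_val_two, Matrix.tail_cons]
    ring
  refine ⟨wf + (mink wf m) • m, ?_, ?_⟩
  · rw [mink_add_left, mink_smul_left, hm.1]; ring
  · intro y hy
    rw [mink_add_right, mink_smul_right, hy, hfy y]; ring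

end Stmt10
namespace Stmt10

lemma sinh_nonneg' {t : ℝ} (ht : 0 ≤ t) : 0 ≤ Real.sinh t := by
  have : Real.sinh 0 ≤ Real.sinh t := Real.sinh_le_sinh.2 ht
  simpa using this

lemma continuous_mink_left (z : V) : Continuous fun y : V => mink y z := by
  unfold mink
  exact (((continuous_apply (0 : Fin 3)).mul continuous_const).add
    ((continuous_apply (1 : Fin 3)).mul continuous_const)).sub
    ((continuous_apply (2 : Fin 3)).mul continuous_const)

end Stmt10


set_option maxHeartbeats 2000000 in
open Stmt10 in
/-- Proposition 3.6: for a `0`-lipschitz convex field `X` defined over all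
of `ℍ²` and a Killing field `v`, the set where the Killing field belongs to `X` is convex. -/
theorem statement10 (X : Set (V × V)) (hX : IsConvexField X) (hdef : DefinedOver X H2)
    (hlip : LipschitzField 0 X) (v : V) :
    HConvex {p | p ∈ H2 ∧ (p, mcross v p) ∈ X} := by
  intro p hp q hq m hmH2 hsum
  obtain ⟨hpH, hpX⟩ := hp
  obtain ⟨hqH, hqX⟩ := hq
  refine ⟨hmH2, ?_⟩
  by_cases hmp : m = p
  · subst hmp; exact hpX
  by_cases hmq : m = q
  · subst hmq; exact hqX
  by_cases hpq : p = q
  · exfalso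
    subst hpq
    have h0 : hdist p p = 0 := by
      have : -(mink p p) = 1 := by rw [hpH.1]; ring
      rw [hdist, this]
      simp [acosh]
    rw [h0] at hsum
    have h1 : 0 ≤ hdist p m := acosh_nonneg (one_le_neg_mink hpH hmH2)
    have h2 : 0 ≤ hdist m p := acosh_nonneg (one_le_neg_mink hmH2 hpH)
    have h3 : hdist p m = 0 := by linarith
    have h4 : -(mink p m) = 1 :=
      eq_one_of_acosh_eq_zero (one_le_neg_mink hpH hmH2) h3
    exact hmp (eq_of_mink_eq hpH hmH2 h4).symm
  -- main case
  obtain ⟨c₁, c₂, hc₁, hc₂, hcomb⟩ := between_comb hpH hqH hmH2 hmp hmq hsum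
  by_contra hnot
  obtain ⟨hcl, hmemX, hconv⟩ := hX
  set T : Set V := {x : V | (m, x) ∈ X} with hT
  have hTconv : Convex ℝ T := hconv m
  have hTcl : IsClosed T := hcl.preimage (Continuous.prodMk_right m)
  set z₀ : V := mcross v m with hz₀
  have hz₀m : mink z₀ m = 0 := mink_mcross_self v m
  have hz₀T : z₀ ∉ T := hnot
  obtain ⟨f, u, hfu1, hfu2⟩ := geometric_hahn_banach_point_closed hTconv hTcl hz₀T
  obtain ⟨h₀, hh₀m, hh₀dual⟩ := exists_dual hmH2 f
  have htangT : ∀ x, x ∈ T → mink x m = 0 := fun x hx => (hmemX (m, x) hx).2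
  obtain ⟨x₀, hx₀⟩ := hdef m hmH2
  have hx₀T : x₀ ∈ T := hx₀
  have hh₀ne : h₀ ≠ 0 := by
    intro h0
    have e1 : mink x₀ h₀ = f x₀ := hh₀dual x₀ (htangT x₀ hx₀T)
    have e2 : mink z₀ h₀ = f z₀ := hh₀dual z₀ hz₀m
    rw [h0] at e1 e2
    simp [mink] at e1 e2
    linarith [e1, e2, hfu1, hfu2 x₀ hx₀T]
  have hsp : 0 < mink h₀ h₀ := tangent_spacelike hmH2 hh₀m hh₀ne
  set N : ℝ := Real.sqrt (mink h₀ h₀) with hN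
  have hN0 : 0 < N := Real.sqrt_pos.2 hsp
  have hN2 : N * N = mink h₀ h₀ := Real.mul_self_sqrt (le_of_lt hsp)
  set h : V := N⁻¹ • h₀ with hh
  have hhm : mink h m = 0 := by rw [hh, mink_smul_left, hh₀m]; ring
  have hhh : mink h h = 1 := by
    rw [hh, mink_smul_left, mink_smul_right, ← hN2]
    field_simp
  -- the gap
  set K : ℝ := mink z₀ h with hK
  set ε : ℝ := N⁻¹ * (u - f z₀) with hε
  have hε0 : 0 < ε := mul_pos (inv_pos.2 hN0) (by linarith)
  have hgap : ∀ x, x ∈ T → K + ε ≤ mink x h := by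
    intro x hx
    have e1 : mink x h₀ = f x := hh₀dual x (htangT x hx)
    have e2 : mink z₀ h₀ = f z₀ := hh₀dual z₀ hz₀m
    have e3 : mink x h = N⁻¹ * f x := by rw [hh, mink_smul_right, e1]
    have e4 : K = N⁻¹ * f z₀ := by rw [hK, hh, mink_smul_right, e2]
    rw [e3, e4, hε]
    have := hfu2 x hx
    have hNi : 0 < N⁻¹ := inv_pos.2 hN0
    nlinarith
  -- geodesic
  set r : ℝ → V := fun t => Real.cosh t • m + Real.sinh t • h with hr
  have hrH2 : ∀ t, r t ∈ H2 := fun t => geodesic_mem hmH2 hhm hhh t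
  have hsel : ∀ t : ℝ, ∃ x, (r t, x) ∈ X := fun t => hdef (r t) (hrH2 t)
  choose xr hxr using hsel
  have hxrt : ∀ t, mink (xr t) (r t) = 0 := fun t => (hmemX _ (hxr t)).2
  set w : ℝ → V := fun t => Real.sinh t • m + Real.cosh t • h with hw
  -- expansions
  have minkr : ∀ (x : V) (t : ℝ),
      mink x (r t) = Real.cosh t * mink x m + Real.sinh t * mink x h := by
    intro x t
    rw [hr]
    simp only []
    rw [mink_add_right, mink_smul_right, mink_smul_right]
  have minkw : ∀ (x : V) (t : ℝ),
      mink x (w t) = Real.sinh t * mink x m + Real.cosh t * mink x h := by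
    intro x t
    rw [hw]
    simp only []
    rw [mink_add_right, mink_smul_right, mink_smul_right]
  -- step A/B: positivity against p, q, m
  have stepP : ∀ t, 0 ≤ mink (xr t) p - mink (mcross v (r t)) p := by
    intro t
    have h1 := pair_key ⟨hcl, hmemX, hconv⟩ hlip hpX (hxr t)
    have h2 := mink_mcross_antisym v p (r t)
    linarith
  have stepQ : ∀ t, 0 ≤ mink (xr t) q - mink (mcross v (r t)) q := by
    intro t
    have h1 := pair_key ⟨hcl, hmemX, hconv⟩ hlip hqX (hxr t)
    have h2 := mink_mcross_antisym v q (r t)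
    linarith
  have stepM : ∀ t, 0 ≤ mink (xr t) m - mink (mcross v (r t)) m := by
    intro t
    have e : ∀ y : V, mink y m = c₁ * mink y p + c₂ * mink y q := by
      intro y
      rw [hcomb, mink_add_right, mink_smul_right, mink_smul_right]
    rw [e, e]
    have := stepP t
    have := stepQ t
    nlinarith
  -- step C: Killing term
  have stepC : ∀ t, mink (mcross v (r t)) m = -(Real.sinh t * K) := by
    intro t
    have e1 : mcross v (r t)
        = Real.cosh t • mcross v m + Real.sinh t • mcross v h := by
      rw [hr]
      simp only []
      rw [mcross_add_right, mcross_smul_right, mcross_smul_right]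
    have hzm' : mink (mcross v m) m = 0 := mink_mcross_self v m
    have e2 : mink (mcross v h) m = -K := by
      rw [hK, hz₀]; exact mink_mcross_antisym v h m
    rw [e1, mink_add_left, mink_smul_left, mink_smul_left, hzm', e2]; ring
  -- step F: key inequality
  have hXmw : ∀ t, mink (xr t) m = -(Real.sinh t * mink (xr t) (w t)) := by
    intro t
    have h0 := hxrt t
    rw [minkr] at h0
    rw [minkw]
    have hcs := Real.cosh_sq_sub_sinh_sq t
    linear_combination Real.cosh t * h0 - mink (xr t) m * hcs
  have stepF : ∀ t, 0 < t → mink (xr t) (w t) ≤ K := by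
    intro t ht
    have h1 := stepM t
    rw [stepC t, hXmw t] at h1
    have hs := sinh_pos_of_pos ht
    nlinarith
  -- reference bounds
  have refbound : ∀ uv : V, mink uv m = 0 → mink uv uv = 1 →
      ∃ Cu : ℝ, 0 ≤ Cu ∧ ∀ t, 0 < t → t ≤ 1 →
        -Cu ≤ Real.cosh 2 * mink (xr t) m + Real.sinh 2 * mink (xr t) uv := by
    intro uv hum huu
    set su : V := Real.cosh 2 • m + Real.sinh 2 • uv with hsu
    have hsuH : su ∈ H2 := geodesic_mem hmH2 hum huu 2
    obtain ⟨xu, hxu⟩ := hdef su hsuH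
    refine ⟨Real.cosh 1 * |mink xu m| + Real.sinh 1 * |mink xu h|, by positivity, ?_⟩
    intro t ht0 ht1
    have hpair := pair_key ⟨hcl, hmemX, hconv⟩ hlip hxu (hxr t)
    have e1 : mink xu (r t) = Real.cosh t * mink xu m + Real.sinh t * mink xu h :=
      minkr xu t
    have e2 : mink (xr t) su
        = Real.cosh 2 * mink (xr t) m + Real.sinh 2 * mink (xr t) uv := by
      rw [hsu, mink_add_right, mink_smul_right, mink_smul_right]
    have hct : Real.cosh t ≤ Real.cosh 1 :=
      Real.cosh_le_cosh.2 (by rw [abs_of_pos ht0, abs_one]; exact ht1)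
    have hst0 : 0 ≤ Real.sinh t := sinh_nonneg' (le_of_lt ht0)
    have hst1 : Real.sinh t ≤ Real.sinh 1 := Real.sinh_le_sinh.2 ht1
    have hc0 : 0 < Real.cosh t := Real.cosh_pos t
    have b1 : Real.cosh t * mink xu m ≤ Real.cosh 1 * |mink xu m| :=
      le_trans (mul_le_mul_of_nonneg_left (le_abs_self _) hc0.le)
        (mul_le_mul_of_nonneg_right hct (abs_nonneg _))
    have b2 : Real.sinh t * mink xu h ≤ Real.sinh 1 * |mink xu h| :=
      le_trans (mul_le_mul_of_nonneg_left (le_abs_self _) hst0)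
        (mul_le_mul_of_nonneg_right hst1 (abs_nonneg _))
    rw [e1, e2] at hpair
    linarith
  -- the four reference directions
  have hnegm : mink ((-1 : ℝ) • h) m = 0 := by rw [mink_smul_left, hhm]; ring
  have hnegu : mink ((-1 : ℝ) • h) ((-1 : ℝ) • h) = 1 := by
    rw [mink_smul_left, mink_smul_right, hhh]; ring
  set h' : V := mcross m h with hh'
  have hh'm : mink h' m = 0 := mink_mcross_self' m h
  have hh'h : mink h' h = 0 := mink_mcross_self m h
  have hh'h' : mink h' h' = 1 := by
    rw [hh', mink_mcross_mcross, hmH2.1, hhh, mink_comm m h, hhm]; ring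
  have hneg'm : mink ((-1 : ℝ) • h') m = 0 := by rw [mink_smul_left, hh'm]; ring
  have hneg'u : mink ((-1 : ℝ) • h') ((-1 : ℝ) • h') = 1 := by
    rw [mink_smul_left, mink_smul_right, hh'h']; ring
  obtain ⟨C1, hC1n, hB1⟩ := refbound h hhm hhh
  obtain ⟨C2, hC2n, hB2⟩ := refbound ((-1 : ℝ) • h) hnegm hnegu
  obtain ⟨C3, hC3n, hB3⟩ := refbound h' hh'm hh'h'
  obtain ⟨C4, hC4n, hB4⟩ := refbound ((-1 : ℝ) • h') hneg'm hneg'u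
  have hs1 : 0 < Real.sinh 1 := sinh_pos_of_pos one_pos
  have hs2 : 0 < Real.sinh 2 := sinh_pos_of_pos two_pos
  -- lower bound on Xw
  have hXwlow : ∀ t, 0 < t → t ≤ 1 → -(C1 / Real.sinh 1) ≤ mink (xr t) (w t) := by
    intro t ht0 ht1
    have h0 := hxrt t
    rw [minkr] at h0
    have c1eq : Real.cosh 2 = Real.cosh (2 - t) * Real.cosh t
        + Real.sinh (2 - t) * Real.sinh t := by
      have := Real.cosh_add (2 - t) t
      rw [show (2 - t) + t = (2:ℝ) by ring] at this
      exact this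
    have s1eq : Real.sinh 2 = Real.sinh (2 - t) * Real.cosh t
        + Real.cosh (2 - t) * Real.sinh t := by
      have := Real.sinh_add (2 - t) t
      rw [show (2 - t) + t = (2:ℝ) by ring] at this
      exact this
    have hid : Real.cosh 2 * mink (xr t) m + Real.sinh 2 * mink (xr t) h
        = Real.sinh (2 - t) * mink (xr t) (w t) := by
      rw [minkw]
      linear_combination mink (xr t) m * c1eq + mink (xr t) h * s1eq
        + Real.cosh (2 - t) * h0
    have hB := hB1 t ht0 ht1
    rw [hid] at hB
    have hs2t : Real.sinh 1 ≤ Real.sinh (2 - t) := Real.sinh_le_sinh.2 (by linarith)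
    set Xw := mink (xr t) (w t) with hXw
    rcases le_or_gt 0 Xw with hw0 | hw0
    · have : 0 ≤ C1 / Real.sinh 1 := div_nonneg hC1n (le_of_lt hs1)
      linarith
    · have key : -C1 ≤ Real.sinh 1 * Xw := by nlinarith
      have hD : Real.sinh 1 * (C1 / Real.sinh 1) = C1 := by field_simp
      nlinarith
  -- per-t coordinate bounds
  set MW : ℝ := C1 / Real.sinh 1 + |K| with hMW
  have hMWn : 0 ≤ MW := by positivity
  set MM : ℝ := Real.sinh 1 * MW with hMM
  have hMMn : 0 ≤ MM := by positivity
  have hXmB : ∀ t, 0 < t → t ≤ 1 → |mink (xr t) m| ≤ MM := by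
    intro t ht0 ht1
    have hlo := hXwlow t ht0 ht1
    have hhi := stepF t ht0
    have habsK : K ≤ |K| := le_abs_self K
    have hst0 : 0 < Real.sinh t := sinh_pos_of_pos ht0
    have hst1 : Real.sinh t ≤ Real.sinh 1 := Real.sinh_le_sinh.2 ht1
    have hXm := hXmw t
    have hC1d : 0 ≤ C1 / Real.sinh 1 := div_nonneg hC1n (le_of_lt hs1)
    set Xw := mink (xr t) (w t) with hXwdef
    have hXwup : Xw ≤ MW := by
      rw [hMW]; linarith
    have hXwlo' : -MW ≤ Xw := by
      rw [hMW]; have := abs_nonneg K; linarith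
    have e1 : Real.sinh t * Xw ≤ Real.sinh t * MW :=
      mul_le_mul_of_nonneg_left hXwup hst0.le
    have e2 : Real.sinh t * MW ≤ Real.sinh 1 * MW :=
      mul_le_mul_of_nonneg_right hst1 hMWn
    have e3 : Real.sinh t * (-Xw) ≤ Real.sinh t * MW :=
      mul_le_mul_of_nonneg_left (by linarith) hst0.le
    rw [abs_le]
    constructor
    · rw [hXm, hMM]; nlinarith
    · rw [hXm, hMM]; nlinarith
  set MH : ℝ := (C1 + C2 + 2 * Real.cosh 2 * MM) / Real.sinh 2 with hMH
  set MH' : ℝ := (C3 + C4 + 2 * Real.cosh 2 * MM) / Real.sinh 2 with hMH'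
  have hXhB : ∀ t, 0 < t → t ≤ 1 → |mink (xr t) h| ≤ MH := by
    intro t ht0 ht1
    have b1 := hB1 t ht0 ht1
    have b2 := hB2 t ht0 ht1
    rw [mink_smul_right] at b2
    have hXm := hXmB t ht0 ht1
    rw [abs_le] at hXm ⊢
    have hc2 : 0 < Real.cosh 2 := Real.cosh_pos 2
    have hMHe : Real.sinh 2 * MH = C1 + C2 + 2 * Real.cosh 2 * MM := by
      rw [hMH]; field_simp
    constructor <;> nlinarith [hXm.1, hXm.2, b1, b2]
  have hXh'B : ∀ t, 0 < t → t ≤ 1 → |mink (xr t) h'| ≤ MH' := by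
    intro t ht0 ht1
    have b1 := hB3 t ht0 ht1
    have b2 := hB4 t ht0 ht1
    rw [mink_smul_right] at b2
    have hXm := hXmB t ht0 ht1
    rw [abs_le] at hXm ⊢
    have hc2 : 0 < Real.cosh 2 := Real.cosh_pos 2
    have hMHe : Real.sinh 2 * MH' = C3 + C4 + 2 * Real.cosh 2 * MM := by
      rw [hMH']; field_simp
    constructor <;> nlinarith [hXm.1, hXm.2, b1, b2]
  -- norm bound
  set R : ℝ := MM * ‖m‖ + MH * ‖h‖ + MH' * ‖h'‖ with hR
  have hnormB : ∀ t, 0 < t → t ≤ 1 → ‖xr t‖ ≤ R := by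
    intro t ht0 ht1
    have hexp := expansion hmH2.1 hhh hhm (xr t)
    rw [← hh'] at hexp
    calc ‖xr t‖ = ‖(-(mink (xr t) m)) • m + mink (xr t) h • h
          + mink (xr t) h' • h'‖ := by rw [← hexp]
      _ ≤ ‖(-(mink (xr t) m)) • m + mink (xr t) h • h‖
          + ‖mink (xr t) h' • h'‖ := norm_add_le _ _
      _ ≤ ‖(-(mink (xr t) m)) • m‖ + ‖mink (xr t) h • h‖
          + ‖mink (xr t) h' • h'‖ := by linarith [norm_add_le ((-(mink (xr t) m)) • m) (mink (xr t) h • h)]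
      _ = |mink (xr t) m| * ‖m‖ + |mink (xr t) h| * ‖h‖
          + |mink (xr t) h'| * ‖h'‖ := by
            simp [norm_smul, Real.norm_eq_abs, abs_neg]
      _ ≤ R := by
            have := hXmB t ht0 ht1
            have := hXhB t ht0 ht1
            have := hXh'B t ht0 ht1
            have nm := norm_nonneg m
            have nh := norm_nonneg h
            have nh' := norm_nonneg h'
            rw [hR]
            nlinarith [abs_nonneg (mink (xr t) m), abs_nonneg (mink (xr t) h),
              abs_nonneg (mink (xr t) h')]
  -- the sequence
  set ts : ℕ → ℝ := fun n => 1 / (n + 1) with hts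
  have hts0 : ∀ n, 0 < ts n := by
    intro n; rw [hts]; positivity
  have hts1 : ∀ n, ts n ≤ 1 := by
    intro n; rw [hts]
    rw [div_le_one (by positivity)]
    have : (0:ℝ) ≤ (n:ℝ) := Nat.cast_nonneg n
    linarith
  have hmem : ∀ n : ℕ, xr (ts n) ∈ Metric.closedBall (0 : V) R := by
    intro n
    rw [Metric.mem_closedBall, dist_zero_right]
    exact hnormB (ts n) (hts0 n) (hts1 n)
  obtain ⟨ystar, _, φ, hφ, hconv2⟩ :=
    (isCompact_closedBall (0 : V) R).tendsto_subseq hmem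
  have htsφ : Filter.Tendsto (fun n => ts (φ n)) Filter.atTop (nhds 0) := by
    have h1 : Filter.Tendsto ts Filter.atTop (nhds 0) := by
      rw [hts]
      exact tendsto_one_div_add_atTop_nhds_zero_nat
    exact h1.comp hφ.tendsto_atTop
  have hrcont : Continuous r := by
    rw [hr]
    exact (Real.continuous_cosh.smul continuous_const).add
      (Real.continuous_sinh.smul continuous_const)
  have hr0 : r 0 = m := by
    rw [hr]; simp
  have hrlim : Filter.Tendsto (fun n => r (ts (φ n))) Filter.atTop (nhds m) := by
    have := (hrcont.tendsto 0).comp htsφ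
    rw [hr0] at this
    exact this
  -- y* belongs to the fiber at m
  have hpairlim : Filter.Tendsto (fun n => (r (ts (φ n)), xr (ts (φ n))))
      Filter.atTop (nhds (m, ystar)) := hrlim.prodMk_nhds hconv2
  have hystarT : ystar ∈ T := by
    have : (m, ystar) ∈ X :=
      hcl.mem_of_tendsto hpairlim (Filter.Eventually.of_forall fun n => hxr _)
    exact this
  -- limit of the key inequality
  have hwcont : Continuous w := by
    rw [hw]
    exact (Real.continuous_sinh.smul continuous_const).add
      (Real.continuous_cosh.smul continuous_const)
  have hw0 : w 0 = h := by rw [hw]; simp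
  have hminkcont : Continuous fun yz : V × V => mink yz.1 yz.2 := by
    unfold mink
    exact (((continuous_apply (0:Fin 3)).comp continuous_fst).mul
      ((continuous_apply (0:Fin 3)).comp continuous_snd)).add
      ((((continuous_apply (1:Fin 3)).comp continuous_fst).mul
      ((continuous_apply (1:Fin 3)).comp continuous_snd))) |>.sub
      (((continuous_apply (2:Fin 3)).comp continuous_fst).mul
      ((continuous_apply (2:Fin 3)).comp continuous_snd))
  have hlim2 : Filter.Tendsto (fun n => mink (xr (ts (φ n))) (w (ts (φ n))))
      Filter.atTop (nhds (mink ystar h)) := by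
    have h1 : Filter.Tendsto (fun n => (xr (ts (φ n)), w (ts (φ n))))
        Filter.atTop (nhds (ystar, h)) := by
      refine hconv2.prodMk_nhds ?_
      have := (hwcont.tendsto 0).comp htsφ
      rw [hw0] at this
      exact this
    exact (hminkcont.tendsto (ystar, h)).comp h1
  have hfinal : mink ystar h ≤ K :=
    le_of_tendsto hlim2 (Filter.Eventually.of_forall fun n => stepF _ (hts0 (φ n)))
  have := hgap ystar hystarT
  linarith
end
end

section
/- Let p₁, …, p_m ∈ ℍ², let x_i be a tangent vector at p_i for each i, let 𝒞′ be a compact subset of the topological interior of the convex hull Conv({p₁,…,p_m}), and let k ∈ ℝ. Then there exists R > 0 such that every k-lipschitz convex field Y defined over 𝒞′ with (p_i, x_i) ∈ Y for each i satisfies ‖y‖ ≤ R for all (p,y) ∈ Y with p ∈ 𝒞′. -/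
noncomputable section

section Lemmas

lemma mink_comm (x y : V) : mink x y = mink y x := by unfold mink; ring

lemma mink_smul_left (c : ℝ) (x y : V) : mink (c • x) y = c * mink x y := by
  unfold mink; simp [Pi.smul_apply, smul_eq_mul]; ring

lemma mink_add_left (x x' y : V) : mink (x + x') y = mink x y + mink x' y := by
  unfold mink; simp [Pi.add_apply]; ring

lemma mink_zero_left (y : V) : mink 0 y = 0 := by unfold mink; simp

lemma continuous_mink : Continuous (fun z : V × V => mink z.1 z.2) := by
  unfold mink; fun_prop

/-- Key identity: for `p ∈ H2` and `x` tangent at `p`. -/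
lemma tangent_identity (p xv : V) (hp : mink p p = -1) (ht : mink xv p = 0) :
    mink xv xv * (p 2)^2 = (xv 0^2 + xv 1^2) + (xv 0 * p 1 - xv 1 * p 0)^2 := by
  unfold mink at *
  linear_combination (-(xv 0^2+xv 1^2)) * hp + (xv 0*p 0+xv 1*p 1+xv 2*p 2) * ht

lemma tangent_nonneg (p xv : V) (hp : p ∈ H2) (ht : mink xv p = 0) : 0 ≤ mink xv xv := by
  obtain ⟨hpp, hp2⟩ := hp
  have h := tangent_identity p xv hpp ht
  nlinarith [h, mul_pos hp2 hp2, sq_nonneg (xv 0), sq_nonneg (xv 1), sq_nonneg (xv 0 * p 1 - xv 1 * p 0)]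

lemma tangent_pos (p xv : V) (hp : p ∈ H2) (ht : mink xv p = 0) (hx : xv ≠ 0) :
    0 < mink xv xv := by
  obtain ⟨hpp, hp2⟩ := hp
  have h := tangent_identity p xv hpp ht
  rcases lt_or_eq_of_le (tangent_nonneg p xv ⟨hpp, hp2⟩ ht) with h' | h'
  · exact h'
  exfalso
  apply hx
  have h0 : xv 0 = 0 ∧ xv 1 = 0 := by
    constructor <;> nlinarith [sq_nonneg (xv 0), sq_nonneg (xv 1), sq_nonneg (xv 0 * p 1 - xv 1 * p 0)]
  have h2 : xv 2 = 0 := by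
    unfold mink at h' ht; nlinarith [h0.1, h0.2]
  funext i
  fin_cases i <;> simp [h0.1, h0.2, h2]

end Lemmas
section Lemmas2

lemma mink_le_neg_one {p q : V} (hp : p ∈ H2) (hq : q ∈ H2) : mink p q ≤ -1 := by
  obtain ⟨hpp, hp2⟩ := hp; obtain ⟨hqq, hq2⟩ := hq
  unfold mink at *
  nlinarith [sq_nonneg (p 0 * q 1 - p 1 * q 0), sq_nonneg (p 0 - q 0), sq_nonneg (p 1 - q 1),
    mul_pos hp2 hq2, sq_nonneg (p 2 - q 2), sq_nonneg (p 2 + q 2)]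

lemma eq_of_mink_eq_neg_one {p q : V} (hp : p ∈ H2) (hq : q ∈ H2) (h : mink p q = -1) :
    p = q := by
  obtain ⟨hpp, hp2⟩ := hp; obtain ⟨hqq, hq2⟩ := hq
  unfold mink at *
  have h0 : p 0 = q 0 := by
    nlinarith [sq_nonneg (p 0 * q 1 - p 1 * q 0), sq_nonneg (p 0 - q 0), sq_nonneg (p 1 - q 1),
      mul_pos hp2 hq2, sq_nonneg (p 2 - q 2), sq_nonneg (p 2 + q 2)]
  have h1 : p 1 = q 1 := by
    nlinarith [sq_nonneg (p 0 * q 1 - p 1 * q 0), sq_nonneg (p 0 - q 0), sq_nonneg (p 1 - q 1),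
      mul_pos hp2 hq2, sq_nonneg (p 2 - q 2), sq_nonneg (p 2 + q 2)]
  have h2 : p 2 = q 2 := by nlinarith [sq_nonneg (p 2 - q 2), sq_nonneg (p 2 + q 2)]
  funext i; fin_cases i <;> assumption

lemma mink_lt_neg_one {p q : V} (hp : p ∈ H2) (hq : q ∈ H2) (hne : p ≠ q) : mink p q < -1 := by
  rcases lt_or_eq_of_le (mink_le_neg_one hp hq) with h | h
  · exact h
  exact absurd (eq_of_mink_eq_neg_one hp hq h) hne

lemma one_lt_sq_mink {p q : V} (hp : p ∈ H2) (hq : q ∈ H2) (hne : p ≠ q) :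
    1 < (mink p q)^2 := by
  have := mink_lt_neg_one hp hq hne
  nlinarith

end Lemmas2
section Lemmas3

lemma sqrt_sq_sub_one_lt {a : ℝ} (ha : 1 ≤ a) : Real.sqrt (a^2-1) < a := by
  have h0 : (0:ℝ) < a := by linarith
  have : a^2 - 1 < a^2 := by linarith
  calc Real.sqrt (a^2-1) < Real.sqrt (a^2) := by
        apply Real.sqrt_lt_sqrt (by nlinarith) this
    _ = a := by rw [Real.sqrt_sq h0.le]

lemma acosh_arg_pos {a : ℝ} (ha : 1 ≤ a) : 0 < a + Real.sqrt (a^2-1) := by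
  have := Real.sqrt_nonneg (a^2-1); linarith

lemma cosh_acosh {a : ℝ} (ha : 1 ≤ a) : Real.cosh (acosh a) = a := by
  have hpos := acosh_arg_pos ha
  have hs : Real.sqrt (a^2-1) ^ 2 = a^2 - 1 := Real.sq_sqrt (by nlinarith)
  have hinv : (a + Real.sqrt (a^2-1))⁻¹ = a - Real.sqrt (a^2-1) := by
    apply inv_eq_of_mul_eq_one_right
    nlinarith
  unfold acosh
  rw [Real.cosh_log hpos, hinv]; ring

lemma sinh_acosh {a : ℝ} (ha : 1 ≤ a) : Real.sinh (acosh a) = Real.sqrt (a^2-1) := by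
  have hpos := acosh_arg_pos ha
  have hs : Real.sqrt (a^2-1) ^ 2 = a^2 - 1 := Real.sq_sqrt (by nlinarith)
  have hinv : (a + Real.sqrt (a^2-1))⁻¹ = a - Real.sqrt (a^2-1) := by
    apply inv_eq_of_mul_eq_one_right
    nlinarith
  unfold acosh
  rw [Real.sinh_log hpos, hinv]; ring

lemma acosh_nonneg {a : ℝ} (ha : 1 ≤ a) : 0 ≤ acosh a := by
  unfold acosh
  apply Real.log_nonneg
  have := Real.sqrt_nonneg (a^2-1); linarith

lemma acosh_eq_zero {a : ℝ} (ha : 1 ≤ a) (h : acosh a = 0) : a = 1 := by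
  have := cosh_acosh ha
  rw [h, Real.cosh_zero] at this; linarith

lemma hasDerivAt_acosh {a : ℝ} (ha : 1 < a) : HasDerivAt acosh (1 / Real.sqrt (a^2-1)) a := by
  have h1 : (0:ℝ) < a^2 - 1 := by nlinarith
  have hs : 0 < Real.sqrt (a^2-1) := Real.sqrt_pos.mpr h1
  have hs2 : Real.sqrt (a^2-1) ^ 2 = a^2 - 1 := Real.sq_sqrt h1.le
  have hpos : 0 < a + Real.sqrt (a^2-1) := by linarith
  have hd1 : HasDerivAt (fun x : ℝ => x^2 - 1) (2*a) a := by
    simpa using ((hasDerivAt_pow 2 a).sub_const 1)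
  have hd2 : HasDerivAt (fun x : ℝ => Real.sqrt (x^2-1)) (1/(2*Real.sqrt (a^2-1)) * (2*a)) a :=
    (Real.hasDerivAt_sqrt h1.ne').comp a hd1
  have hd3 : HasDerivAt (fun x : ℝ => x + Real.sqrt (x^2-1))
      (1 + 1/(2*Real.sqrt (a^2-1)) * (2*a)) a := (hasDerivAt_id a).add hd2
  have hd4 : HasDerivAt (fun x : ℝ => Real.log (x + Real.sqrt (x^2-1)))
      ((a + Real.sqrt (a^2-1))⁻¹ * (1 + 1/(2*Real.sqrt (a^2-1)) * (2*a))) a := by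
    exact (Real.hasDerivAt_log hpos.ne').comp a hd3
  have heq : (a + Real.sqrt (a^2-1))⁻¹ * (1 + 1/(2*Real.sqrt (a^2-1)) * (2*a))
      = 1 / Real.sqrt (a^2-1) := by
    field_simp
    nlinarith
  rw [heq] at hd4
  exact hd4

end Lemmas3
section Lemmas4

lemma mexp_zero (p x : V) : mexp p x 0 = p := by
  unfold mexp
  split
  · rfl
  · simp

lemma mnorm_pos {x : V} (h : 0 < mink x x) : 0 < mnorm x := Real.sqrt_pos.mpr h

lemma mnorm_sq {x : V} (h : 0 ≤ mink x x) : mnorm x ^ 2 = mink x x := Real.sq_sqrt h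

lemma hasDerivAt_mexp_apply (p x : V) (hx : x = 0 ∨ 0 < mink x x) (i : Fin 3) :
    HasDerivAt (fun t => mexp p x t i) (x i) 0 := by
  rcases hx with h | h
  · subst h
    simp only [mexp, if_pos rfl]
    simpa using hasDerivAt_const (0:ℝ) (p i)
  · have hx0 : x ≠ 0 := by
      rintro rfl; simp [mink] at h
    have hn : 0 < mnorm x := mnorm_pos h
    have key : ∀ t, mexp p x t i
        = Real.cosh (t * mnorm x) * p i + (Real.sinh (t * mnorm x) / mnorm x) * x i := by
      intro t
      simp [mexp, if_neg hx0, Pi.add_apply, Pi.smul_apply, smul_eq_mul]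
    have hd1 : HasDerivAt (fun t : ℝ => t * mnorm x) (mnorm x) 0 := by
      simpa using (hasDerivAt_id (0:ℝ)).mul_const (mnorm x)
    have hdc : HasDerivAt (fun t : ℝ => Real.cosh (t * mnorm x))
        (Real.sinh (0 * mnorm x) * mnorm x) 0 := (Real.hasDerivAt_cosh _).comp 0 hd1
    have hds : HasDerivAt (fun t : ℝ => Real.sinh (t * mnorm x))
        (Real.cosh (0 * mnorm x) * mnorm x) 0 := (Real.hasDerivAt_sinh _).comp 0 hd1
    have h1 : HasDerivAt (fun t : ℝ => Real.cosh (t * mnorm x) * p i)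
        (Real.sinh (0 * mnorm x) * mnorm x * p i) 0 := hdc.mul_const _
    have h2 : HasDerivAt (fun t : ℝ => (Real.sinh (t * mnorm x) / mnorm x) * x i)
        ((Real.cosh (0 * mnorm x) * mnorm x) / mnorm x * x i) 0 :=
      (hds.div_const _).mul_const _
    have := h1.add h2
    have heq : Real.sinh (0 * mnorm x) * mnorm x * p i
        + (Real.cosh (0 * mnorm x) * mnorm x) / mnorm x * x i = x i := by
      simp [Real.sinh_zero, Real.cosh_zero]
      field_simp
    rw [heq] at this
    exact this.congr_deriv rfl |>.congr_of_eventuallyEq (by filter_upwards with t; rw [key t]; rfl)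

/-- Derivative of minus the Minkowski product along the two geodesics. -/
lemma hasDerivAt_negmink (p xp q xq : V) (hxp : xp = 0 ∨ 0 < mink xp xp)
    (hxq : xq = 0 ∨ 0 < mink xq xq) :
    HasDerivAt (fun t => -(mink (mexp p xp t) (mexp q xq t)))
      (-(mink xp q + mink p xq)) 0 := by
  have hA := fun i => hasDerivAt_mexp_apply p xp hxp i
  have hB := fun i => hasDerivAt_mexp_apply q xq hxq i
  have h01 := (hA 0).mul (hB 0)
  have h11 := (hA 1).mul (hB 1)
  have h21 := (hA 2).mul (hB 2)
  have hsum := ((h01.add h11).sub h21).neg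
  have : (fun t => -(mink (mexp p xp t) (mexp q xq t)))
      = fun t => -((fun t => mexp p xp t 0) t * (fun t => mexp q xq t 0) t
          + (fun t => mexp p xp t 1) t * (fun t => mexp q xq t 1) t
          - (fun t => mexp p xp t 2) t * (fun t => mexp q xq t 2) t) := by
    funext t; simp [mink]
  rw [this]
  convert hsum using 1
  · rfl
  · rfl
  · rfl
  simp only [mexp_zero]
  simp [mink]
  ring

end Lemmas4
section Lemmas5

lemma spacelike_or_zero {p xv : V} (hp : p ∈ H2) (ht : mink xv p = 0) :
    xv = 0 ∨ 0 < mink xv xv := by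
  by_cases h : xv = 0
  · exact Or.inl h
  · exact Or.inr (tangent_pos p xv hp ht h)

lemma dprime_formula (p xp q xq : V) (hp : p ∈ H2) (hq : q ∈ H2) (hne : p ≠ q)
    (hxp : mink xp p = 0) (hxq : mink xq q = 0) :
    dprime p xp q xq = -(mink xp q + mink p xq) / Real.sqrt ((mink p q)^2 - 1) := by
  set c : ℝ := -(mink p q) with hc
  have hc1 : 1 < c := by have := mink_lt_neg_one hp hq hne; simp [hc]; linarith
  have hg : HasDerivAt (fun t => -(mink (mexp p xp t) (mexp q xq t)))
      (-(mink xp q + mink p xq)) 0 :=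
    hasDerivAt_negmink p xp q xq (spacelike_or_zero hp hxp) (spacelike_or_zero hq hxq)
  have hg0 : -(mink (mexp p xp 0) (mexp q xq 0)) = c := by rw [mexp_zero, mexp_zero]
  have hac : HasDerivAt acosh (1 / Real.sqrt (c^2-1)) (-(mink (mexp p xp 0) (mexp q xq 0))) := by
    rw [hg0]; exact hasDerivAt_acosh hc1
  have hcomp := hac.comp 0 hg
  have hfun : (acosh ∘ fun t => -(mink (mexp p xp t) (mexp q xq t)))
      = fun t => hdist (mexp p xp t) (mexp q xq t) := by
    funext t; simp [hdist, Function.comp]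
  rw [hfun] at hcomp
  have : dprime p xp q xq = 1 / Real.sqrt (c^2-1) * (-(mink xp q + mink p xq)) :=
    hcomp.deriv
  rw [this]
  have : c^2 = (mink p q)^2 := by rw [hc]; ring
  rw [this]; ring

end Lemmas5
section Lemmas6

lemma decomp_identity (p q m : V) (i : Fin 3) :
    (mink p p * mink q q - (mink p q)^2) * m i
      = (mink q q * mink m p - mink p q * mink m q) * p i
        + (mink p p * mink m q - mink p q * mink m p) * q i
        - mink m (mcross p q) * mcross p q i := by
  fin_cases i <;> simp [mink, mcross] <;> ring

lemma mink_mcross_sq (p q m : V) :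
    (mink m (mcross p q))^2
      = - mink p p * mink q q * mink m m + mink p p * (mink q m)^2
        + (mink p q)^2 * mink m m - 2 * mink p q * mink p m * mink q m
        + mink q q * (mink p m)^2 := by
  simp [mink, mcross]; ring

end Lemmas6
section Lemmas7

/-- A point between `p` and `q` is a nonnegative combination of them. -/
lemma between_decomp {p q m : V} (hp : p ∈ H2) (hq : q ∈ H2) (hm : m ∈ H2)
    (hne : p ≠ q) (hbet : hdist p m + hdist m q = hdist p q) :
    ∃ α β : ℝ, 0 ≤ α ∧ 0 ≤ β ∧ m = α • p + β • q := by
  set a : ℝ := -(mink p m) with ha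
  set b : ℝ := -(mink m q) with hb
  set c : ℝ := -(mink p q) with hc
  have ha1 : 1 ≤ a := by have := mink_le_neg_one hp hm; simp [ha]; linarith
  have hb1 : 1 ≤ b := by have := mink_le_neg_one hm hq; simp [hb]; linarith
  have hc1 : 1 < c := by have := mink_lt_neg_one hp hq hne; simp [hc]; linarith
  set sa : ℝ := Real.sqrt (a^2-1) with hsa'
  set sb : ℝ := Real.sqrt (b^2-1) with hsb'
  have hsa : sa^2 = a^2-1 := Real.sq_sqrt (by nlinarith)
  have hsb : sb^2 = b^2-1 := Real.sq_sqrt (by nlinarith)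
  have hsa0 : 0 ≤ sa := Real.sqrt_nonneg _
  have hsb0 : 0 ≤ sb := Real.sqrt_nonneg _
  -- the addition formula
  have hcab : c = a * b + sa * sb := by
    have h1 : hdist p m = acosh a := rfl
    have h2 : hdist m q = acosh b := rfl
    have h3 : hdist p q = acosh c := rfl
    have : Real.cosh (acosh a + acosh b) = Real.cosh (acosh c) := by
      rw [← h1, ← h2, ← h3, hbet]
    rw [Real.cosh_add, cosh_acosh ha1, cosh_acosh hb1, cosh_acosh hc1.le,
      sinh_acosh ha1, sinh_acosh hb1] at this
    rw [← this]
  have hs : c - a * b = sa * sb := by linarith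
  -- the Gram relation
  have hQ : 1 - a^2 - b^2 - c^2 + 2*a*b*c = 0 := by
    linear_combination (-(c - a*b) - sa*sb) * hs + (-sb^2) * hsa + (-(a^2 - 1)) * hsb
  -- m is coplanar with p and q
  have hmn : mink m (mcross p q) = 0 := by
    have h := mink_mcross_sq p q m
    have hpp : mink p p = -1 := hp.1
    have hqq : mink q q = -1 := hq.1
    have hmm : mink m m = -1 := hm.1
    have hpm : mink p m = -a := by rw [ha]; ring
    have hqm : mink q m = -b := by rw [mink_comm, hb]; ring
    have hpq : mink p q = -c := by rw [hc]; ring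
    rw [hpp, hqq, hmm, hpm, hqm, hpq] at h
    have h0 : (mink m (mcross p q))^2 = 0 := by rw [h]; linear_combination hQ
    exact pow_eq_zero_iff (by norm_num : 2 ≠ 0) |>.mp h0
  -- the decomposition
  refine ⟨(b*c - a)/(c^2-1), (a*c - b)/(c^2-1), ?_, ?_, ?_⟩
  · apply div_nonneg _ (by nlinarith)
    nlinarith
  · apply div_nonneg _ (by nlinarith)
    nlinarith
  · funext i
    have h := decomp_identity p q m i
    have hpp : mink p p = -1 := hp.1
    have hqq : mink q q = -1 := hq.1
    have hmp : mink m p = -a := by rw [mink_comm, ha]; ring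
    have hmq : mink m q = -b := by rw [hb]; ring
    have hpq : mink p q = -c := by rw [hc]; ring
    rw [hpp, hqq, hmp, hmq, hpq, hmn] at h
    have hc2 : c^2 - 1 ≠ 0 := by nlinarith
    simp only [Pi.add_apply, Pi.smul_apply, smul_eq_mul]
    have h2 : m i * (c^2-1) = (b*c - a) * p i + (a*c - b) * q i := by linear_combination -h
    rw [div_mul_eq_mul_div, div_mul_eq_mul_div, ← add_div, eq_div_iff hc2]
    linear_combination h2

end Lemmas7
section Lemmas8

lemma hdist_self {p : V} (hp : p ∈ H2) : hdist p p = 0 := by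
  have : -(mink p p) = 1 := by rw [hp.1]; ring
  unfold hdist
  rw [this]
  unfold acosh
  norm_num

lemma hconvex_halfspace (u : V) : HConvex {m | m ∈ H2 ∧ 0 ≤ mink u m} := by
  intro a ha b hb m hm hbet
  refine ⟨hm, ?_⟩
  by_cases hab : a = b
  · subst hab
    rw [hdist_self ha.1] at hbet
    have h1 : 1 ≤ -(mink a m) := by have := mink_le_neg_one ha.1 hm; linarith
    have h2 : 1 ≤ -(mink m a) := by have := mink_le_neg_one hm ha.1; linarith
    have hd1 : 0 ≤ hdist a m := acosh_nonneg h1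
    have hd2 : 0 ≤ hdist m a := acosh_nonneg h2
    have : hdist a m = 0 := by linarith
    have : -(mink a m) = 1 := acosh_eq_zero h1 this
    have hma : m = a := (eq_of_mink_eq_neg_one ha.1 hm (by linarith)).symm
    rw [hma]; exact ha.2
  · obtain ⟨α, β, hα, hβ, hdecomp⟩ := between_decomp ha.1 hb.1 hm hab hbet
    have : mink u m = α * mink u a + β * mink u b := by
      rw [hdecomp, mink_comm]
      rw [mink_add_left, mink_smul_left, mink_smul_left, mink_comm a u, mink_comm b u]
    rw [this]
    have := ha.2; have := hb.2
    positivity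

lemma interior_dir {n : ℕ} (p : Fin n → V) (hp : ∀ i, p i ∈ H2) {q u : V}
    (hq : q ∈ relInterior (hconvexHull (Set.range p)))
    (hu1 : mink u q = 0) (hu2 : mink u u = 1) : ∃ i, mink u (p i) < 0 := by
  by_contra hcon
  push_neg at hcon
  set C₀ : Set V := {m | m ∈ H2 ∧ 0 ≤ mink u m} with hC₀
  have hmem : C₀ ∈ {C : Set V | Set.range p ⊆ C ∧ C ⊆ H2 ∧ HConvex C} := by
    refine ⟨?_, fun m hm => hm.1, hconvex_halfspace u⟩
    rintro - ⟨i, rfl⟩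
    exact ⟨hp i, hcon i⟩
  have hsub : hconvexHull (Set.range p) ⊆ C₀ := Set.sInter_subset_of_mem hmem
  obtain ⟨hqH2, O, hO, hqO, hOsub⟩ := hq
  set mf : ℝ → V := fun t => (fun i => Real.cosh t * q i - Real.sinh t * u i) with hmf
  have hmf0 : mf 0 = q := by
    funext i; simp [hmf]
  have hcont : Continuous mf := by
    apply continuous_pi
    intro i
    exact (Real.continuous_cosh.mul continuous_const).sub
      (Real.continuous_sinh.mul continuous_const)
  have hUopen : IsOpen {t : ℝ | mf t ∈ O ∧ 0 < mf t 2} := by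
    apply IsOpen.inter
    · exact hO.preimage hcont
    · have : Continuous fun t => mf t 2 := (continuous_apply 2).comp hcont
      exact isOpen_lt continuous_const this
  have h0U : (0:ℝ) ∈ {t : ℝ | mf t ∈ O ∧ 0 < mf t 2} := by
    constructor
    · rw [hmf0]; exact hqO
    · rw [hmf0]; exact hqH2.2
  obtain ⟨ε, hε, hball⟩ := Metric.isOpen_iff.mp hUopen 0 h0U
  set t := ε/2 with ht
  have htpos : 0 < t := by positivity
  have htU : mf t ∈ O ∧ 0 < mf t 2 := by
    apply hball
    rw [Metric.mem_ball, dist_zero_right, Real.norm_eq_abs, abs_of_pos htpos, ht]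
    linarith
  have hmH2 : mf t ∈ H2 := by
    constructor
    · have hqq : mink q q = -1 := hqH2.1
      unfold mink at hqq hu1 hu2 ⊢
      simp only [hmf]
      have hcs : Real.cosh t ^ 2 - Real.sinh t ^ 2 = 1 := Real.cosh_sq_sub_sinh_sq t
      linear_combination (Real.cosh t^2) * hqq + (-2*Real.cosh t*Real.sinh t) * hu1
        + (Real.sinh t^2) * hu2 + (-1) * hcs
    · exact htU.2
  have hmC₀ : mf t ∈ C₀ := hsub (hOsub ⟨htU.1, hmH2⟩)
  have : mink u (mf t) = -Real.sinh t := by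
    unfold mink at hu1 hu2 ⊢
    simp only [hmf]
    linear_combination Real.cosh t * hu1 + (- Real.sinh t) * hu2
  have hsinh : 0 < Real.sinh t := by
    rw [Real.sinh_eq]
    have h1 : Real.exp (-t) < Real.exp t := Real.exp_lt_exp.mpr (by linarith)
    linarith
  have h2 := hmC₀.2
  rw [this] at h2
  linarith

end Lemmas8
/-- Lemma 4.2: given finitely many points `pᵢ ∈ ℍ²` with tangent vectors
`xᵢ`, a compact set `𝒞′` inside the interior of their convex hull, and `k ∈ ℝ`, all
`k`-lipschitz convex field extensions of `{(pᵢ, xᵢ)}` to `𝒞′` are uniformly bounded. -/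
theorem statement12 (m : ℕ) (p x : Fin m → V)
    (hp : ∀ i, p i ∈ H2) (hx : ∀ i, mink (x i) (p i) = 0)
    (𝒞' : Set V) (h𝒞'c : IsCompact 𝒞')
    (h𝒞' : 𝒞' ⊆ relInterior (hconvexHull (Set.range p))) (k : ℝ) :
    ∃ R : ℝ, 0 < R ∧ ∀ Y : Set (V × V), IsConvexField Y → LipschitzField k Y →
      DefinedOver Y 𝒞' → (∀ i, (p i, x i) ∈ Y) →
      ∀ qy ∈ Y, qy.1 ∈ 𝒞' → mnorm qy.2 ≤ R := by
  by_cases hne : 𝒞'.Nonempty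
  swap
  · exact ⟨1, one_pos, fun Y _ _ _ _ qy _ hq1 => absurd ⟨qy.1, hq1⟩ hne⟩
  -- every point of 𝒞' is in H2
  have h𝒞'H2 : ∀ q ∈ 𝒞', q ∈ H2 := fun q hq => (h𝒞' hq).1
  -- Fin m is nonempty
  haveI hm0 : Nonempty (Fin m) := by
    by_contra h
    simp only [not_nonempty_iff] at h
    obtain ⟨q0, hq0⟩ := hne
    obtain ⟨hq0H2, O, hO, hqO, hOsub⟩ := h𝒞' hq0
    have hr : Set.range p = ∅ := Set.range_eq_empty p
    have hmem : (∅ : Set V) ∈ {C : Set V | Set.range p ⊆ C ∧ C ⊆ H2 ∧ HConvex C} := by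
      refine ⟨by rw [hr], Set.empty_subset _, fun a ha => absurd ha (Set.notMem_empty a)⟩
    exact (Set.sInter_subset_of_mem hmem) (hOsub ⟨hqO, hq0H2⟩)
  -- the bound C from compactness
  set f : V → Fin m → ℝ := fun q i =>
    k * acosh (-(mink q (p i))) * Real.sqrt ((mink q (p i))^2 - 1) + mink (x i) q with hf
  have hminkc : ∀ w : V, Continuous fun q : V => mink q w := by
    intro w
    exact continuous_mink.comp (continuous_id.prodMk continuous_const)
  have hminkc' : ∀ w : V, Continuous fun q : V => mink w q := by
    intro w
    exact continuous_mink.comp (continuous_const.prodMk continuous_id)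
  have hfc : ContinuousOn f 𝒞' := by
    apply continuousOn_pi.mpr
    intro i
    have hg : Continuous fun q : V => -(mink q (p i)) := (hminkc (p i)).neg
    have hinner : Continuous fun q : V =>
        -(mink q (p i)) + Real.sqrt ((-(mink q (p i)))^2 - 1) :=
      hg.add (Real.continuous_sqrt.comp ((hg.pow 2).sub continuous_const))
    have hlog : ContinuousOn (fun q : V => acosh (-(mink q (p i)))) 𝒞' := by
      simp only [acosh]
      apply ContinuousOn.log hinner.continuousOn
      intro q hq
      have h1 : 1 ≤ -(mink q (p i)) := by
        have := mink_le_neg_one (h𝒞'H2 q hq) (hp i); linarith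
      have := Real.sqrt_nonneg ((-(mink q (p i)))^2 - 1)
      intro h0; nlinarith
    have hsq : Continuous fun q : V => Real.sqrt ((mink q (p i))^2 - 1) :=
      Real.continuous_sqrt.comp (((hminkc (p i)).pow 2).sub continuous_const)
    exact ((continuousOn_const.mul hlog).mul hsq.continuousOn).add
      (hminkc' (x i)).continuousOn
  obtain ⟨C₀, hC₀⟩ := h𝒞'c.exists_bound_of_continuousOn hfc
  set C : ℝ := |C₀| + 1 with hC
  have hCpos : 0 < C := by positivity
  have hCb : ∀ q ∈ 𝒞', ∀ i, f q i ≤ C := by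
    intro q hq i
    have h1 : |f q i| ≤ ‖f q‖ := by
      simpa using norm_le_pi_norm (f q) i
    have h2 := hC₀ q hq
    have h3 : C₀ ≤ |C₀| := le_abs_self C₀
    have := abs_le.mp (le_trans h1 (by linarith) : |f q i| ≤ |C₀|)
    linarith [this.2]
  -- the compact set of unit tangent vectors over 𝒞'
  set S : Set (V × V) := {z | z.1 ∈ 𝒞' ∧ mink z.2 z.1 = 0 ∧ mink z.2 z.2 = 1} with hS
  have hSclosed : IsClosed S := by
    have h1 : IsClosed {z : V × V | z.1 ∈ 𝒞'} := h𝒞'c.isClosed.preimage continuous_fst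
    have h2 : IsClosed {z : V × V | mink z.2 z.1 = 0} :=
      isClosed_eq (continuous_mink.comp (continuous_snd.prodMk continuous_fst))
        continuous_const
    have h3 : IsClosed {z : V × V | mink z.2 z.2 = 1} :=
      isClosed_eq (continuous_mink.comp (continuous_snd.prodMk continuous_snd))
        continuous_const
    exact (h1.inter (h2.inter h3)).mono (by intro z hz; exact hz) |>.mono le_rfl
  have hSbounded : Bornology.IsBounded S := by
    obtain ⟨B, hB⟩ := h𝒞'c.exists_bound_of_continuousOn continuousOn_id
    have hB0 : 0 ≤ B := by
      obtain ⟨q0, hq0⟩ := hne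
      exact le_trans (norm_nonneg q0) (hB q0 hq0)
    apply Bornology.IsBounded.subset (Metric.isBounded_closedBall (x := (0 : V × V)) (r := B))
    intro z hz
    obtain ⟨hz1, hz2, hz3⟩ := hz
    rw [Metric.mem_closedBall, dist_zero_right, Prod.norm_def]
    apply max_le (hB z.1 hz1)
    -- bound the unit vector
    have hqH2 := h𝒞'H2 z.1 hz1
    have hid := tangent_identity z.1 z.2 hqH2.1 hz2
    rw [hz3] at hid
    have hq2 : |z.1 2| ≤ B := by
      have := norm_le_pi_norm z.1 2
      simp only [Real.norm_eq_abs] at this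
      exact le_trans this (hB z.1 hz1)
    have hq2sq : (z.1 2)^2 ≤ B^2 := by nlinarith [abs_nonneg (z.1 2), sq_abs (z.1 2)]
    have h01 : z.2 0 ^2 + z.2 1 ^2 ≤ B^2 := by nlinarith [sq_nonneg (z.2 0 * z.1 1 - z.2 1 * z.1 0)]
    have h2sq : z.2 2 ^ 2 ≤ B^2 := by
      have : mink z.2 z.2 = 1 := hz3
      unfold mink at this
      nlinarith
    have hsq' : ∀ i : Fin 3, (z.2 i)^2 ≤ B^2 := by
      intro i; fin_cases i
      · show (z.2 0)^2 ≤ B^2; nlinarith [sq_nonneg (z.2 1)]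
      · show (z.2 1)^2 ≤ B^2; nlinarith [sq_nonneg (z.2 0)]
      · show (z.2 2)^2 ≤ B^2; exact h2sq
    apply pi_norm_le_iff_of_nonneg hB0 |>.mpr
    intro i
    rw [Real.norm_eq_abs]
    have := hsq' i
    apply abs_le.mpr
    constructor <;> nlinarith
  have hScompact : IsCompact S := Metric.isCompact_of_isClosed_isBounded hSclosed hSbounded
  -- the uniform angle δ
  have hFc : ContinuousOn (fun z : V × V =>
      Finset.univ.inf' Finset.univ_nonempty (fun i => mink z.2 (p i))) S := by
    apply Continuous.continuousOn
    have heq : (fun z : V × V =>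
        Finset.univ.inf' Finset.univ_nonempty (fun i => mink z.2 (p i)))
        = Finset.univ.inf' Finset.univ_nonempty
            (fun (i : Fin m) => fun z : V × V => mink z.2 (p i)) := by
      funext z
      rw [Finset.inf'_apply]
    rw [heq]
    apply Continuous.finset_inf' Finset.univ_nonempty
    intro i _
    exact continuous_mink.comp (continuous_snd.prodMk continuous_const)
  have hmain : ∃ δ : ℝ, 0 < δ ∧ ∀ z ∈ S, ∃ i, mink z.2 (p i) ≤ -δ := by
    by_cases hSne : S.Nonempty
    · obtain ⟨z₀, hz₀S, hz₀max⟩ := hScompact.exists_isMaxOn hSne hFc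
      set F : V × V → ℝ := fun z => Finset.univ.inf' Finset.univ_nonempty
        (fun i => mink z.2 (p i)) with hF
      have hFneg : F z₀ < 0 := by
        obtain ⟨i, hi⟩ := interior_dir p hp (h𝒞' hz₀S.1) hz₀S.2.1 hz₀S.2.2
        calc F z₀ ≤ mink z₀.2 (p i) := Finset.inf'_le _ (Finset.mem_univ i)
          _ < 0 := hi
      refine ⟨-(F z₀), by linarith, ?_⟩
      intro z hz
      obtain ⟨i, _, hi⟩ := Finset.exists_mem_eq_inf' Finset.univ_nonempty
        (fun i => mink z.2 (p i))
      refine ⟨i, ?_⟩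
      have h1 : F z ≤ F z₀ := hz₀max hz
      rw [hF] at h1
      simp only [neg_neg]
      calc mink z.2 (p i) = F z := hi.symm
        _ ≤ F z₀ := hz₀max hz
    · exact ⟨1, one_pos, fun z hz => absurd ⟨z, hz⟩ hSne⟩
  obtain ⟨δ, hδpos, hδ⟩ := hmain
  -- the final bound
  refine ⟨C/δ + 1, by positivity, ?_⟩
  rintro Y hYcf hYlip hYdef hYpts ⟨q, y⟩ hqyY hq𝒞'
  show mnorm y ≤ C/δ + 1
  have hqH2 : q ∈ H2 := (hYcf.2.1 (q, y) hqyY).1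
  have hyq : mink y q = 0 := (hYcf.2.1 (q, y) hqyY).2
  by_cases hy0 : y = 0
  · subst hy0
    have : mnorm (0 : V) = 0 := by
      unfold mnorm
      rw [mink_zero_left, Real.sqrt_zero]
    rw [this]
    positivity
  -- y is spacelike
  have hyy : 0 < mink y y := tangent_pos q y hqH2 hyq hy0
  have hmn : 0 < mnorm y := mnorm_pos hyy
  have hmnsq : mnorm y ^ 2 = mink y y := mnorm_sq hyy.le
  set u : V := (mnorm y)⁻¹ • y with hu
  have hyu : y = mnorm y • u := by
    rw [hu, smul_smul, mul_inv_cancel₀ hmn.ne', one_smul]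
  have huq : mink u q = 0 := by rw [hu, mink_smul_left, hyq, mul_zero]
  have huu : mink u u = 1 := by
    rw [hu, mink_smul_left, mink_comm, mink_smul_left, mink_comm y y]
    rw [← hmnsq]
    field_simp
  have hqu_S : (q, u) ∈ S := ⟨hq𝒞', huq, huu⟩
  obtain ⟨i, hi⟩ := hδ (q, u) hqu_S
  -- the lower bound on mink y (p i) from the lipschitz property
  have hlow : -C ≤ mink y (p i) := by
    by_cases hpq : p i = q
    · rw [hpq, hyq]
      linarith
    · have hne' : q ≠ p i := fun h => hpq h.symm
      have hlip := hYlip q y (p i) (x i) hqyY (hYpts i) hne'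
      have hform := dprime_formula q y (p i) (x i) hqH2 (hp i) hne' hyq (hx i)
      rw [hform] at hlip
      set s : ℝ := Real.sqrt ((mink q (p i))^2 - 1) with hs'
      have hspos : 0 < s := Real.sqrt_pos.mpr (by
        have := one_lt_sq_mink hqH2 (hp i) hne'; linarith)
      rw [div_le_iff₀ hspos] at hlip
      have hfq : f q i = k * hdist q (p i) * s + mink (x i) q := rfl
      have hminkcomm : mink q (x i) = mink (x i) q := mink_comm _ _
      have hfC := hCb q hq𝒞' i
      rw [hfq] at hfC
      linarith
  -- the upper bound
  have hi' : mink u (p i) ≤ -δ := hi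
  have hylp : mink y (p i) = mnorm y * mink u (p i) := by
    calc mink y (p i) = mink (mnorm y • u) (p i) := by rw [← hyu]
      _ = mnorm y * mink u (p i) := mink_smul_left _ _ _
  have hhigh : mink y (p i) ≤ -δ * mnorm y := by
    rw [hylp]
    nlinarith [mul_nonneg (by linarith : (0:ℝ) ≤ -δ - mink u (p i)) hmn.le]
  have : δ * mnorm y ≤ C := by linarith
  have : mnorm y ≤ C / δ := by
    rw [le_div_iff₀ hδpos]; linarith
  linarith
end
end

section
/- (Rescaled limit of anti-de Sitter isometries is a Minkowski isometry.) Let h, k : ℝ → SL₂(ℝ) be paths, differentiable at 0 as maps into M₂(ℝ), with h(0) = k(0), and let u := (d/dt)|_{t=0} (k(t)·h(t)⁻¹) ∈ M₂(ℝ) (a trace-zero matrix). Then, as t → 0⁺, the linear endomorphisms of M₂(ℝ) given by M ↦ r̂_t(k(t) · r̂_t⁻¹(M) · h(t)⁻¹) converge (in any norm on the space of linear endomorphisms of M₂(ℝ)) to the linear endomorphism M ↦ h(0)·(M − (tr M/2)·I)·h(0)⁻¹ + (tr M/2)·(I + u). -/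
set_option maxHeartbeats 1000000
set_option synthInstance.maxHeartbeats 400000

noncomputable section

attribute [local instance] Matrix.normedAddCommGroup Matrix.normedSpace

/-- The space `M₂(ℝ)` of 2×2 real matrices. -/
abbrev M2 : Type := Matrix (Fin 2) (Fin 2) ℝ

/-- The linear map `M ↦ (tr M / 2) · I` on `M₂(ℝ)`. -/
def trHalf : M2 →ₗ[ℝ] M2 :=
  LinearMap.smulRight ((1 / 2 : ℝ) • Matrix.traceLinearMap (Fin 2) ℝ ℝ) (1 : M2)

/-- The projective rescaling `r̂_t(M) = t⁻¹·(M − (tr M/2)·I) + (tr M/2)·I` as a linear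
endomorphism of `M₂(ℝ)`. -/
def rhat (t : ℝ) : M2 →ₗ[ℝ] M2 := t⁻¹ • (LinearMap.id - trHalf) + trHalf

/-- The inverse rescaling `r̂_t⁻¹(M) = t·(M − (tr M/2)·I) + (tr M/2)·I`. -/
def rhatInv (t : ℝ) : M2 →ₗ[ℝ] M2 := t • (LinearMap.id - trHalf) + trHalf

/-- The linear map `M ↦ a · M · b` on `M₂(ℝ)`. -/
def conjMap (a b : M2) : M2 →ₗ[ℝ] M2 :=
  (LinearMap.mulLeft ℝ a).comp (LinearMap.mulRight ℝ b)

/-! ### Auxiliary definitions for the proof -/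

abbrev E2 : Type := M2 →L[ℝ] M2

def entryLM (i j : Fin 2) : M2 →ₗ[ℝ] ℝ where
  toFun M := M i j
  map_add' _ _ := rfl
  map_smul' _ _ := rfl

def adjLM : M2 →ₗ[ℝ] M2 :=
  (Matrix.traceLinearMap (Fin 2) ℝ ℝ).smulRight 1 - LinearMap.id

lemma adjLM_eq (A : M2) : adjLM A = A.adjugate := by
  rw [Matrix.adjugate_fin_two]
  ext i j
  fin_cases i <;> fin_cases j <;>
    simp [adjLM, Matrix.trace_fin_two, Matrix.one_apply]

def conjL2 (L1 L2 : M2 →ₗ[ℝ] M2) (a : M2) : M2 →ₗ[ℝ] E2 where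
  toFun b := LinearMap.toContinuousLinearMap (L1 ∘ₗ (conjMap a b) ∘ₗ L2)
  map_add' b b' := by
    ext M
    simp [conjMap, mul_add]
  map_smul' s b := by
    ext M
    simp [conjMap, Matrix.mul_smul]

def conjL1 (L1 L2 : M2 →ₗ[ℝ] M2) : M2 →ₗ[ℝ] (M2 →L[ℝ] E2) where
  toFun a := (conjL2 L1 L2 a).toContinuousLinearMap
  map_add' a a' := by
    ext b M
    simp [conjL2, conjMap, add_mul]
  map_smul' s a := by
    ext b M
    simp [conjL2, conjMap, Matrix.smul_mul]

def conjC (L1 L2 : M2 →ₗ[ℝ] M2) (a b : M2) : E2 := conjL1 L1 L2 a b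

lemma conjC_apply (L1 L2 : M2 →ₗ[ℝ] M2) (a b : M2) :
    conjC L1 L2 a b = LinearMap.toContinuousLinearMap (L1 ∘ₗ (conjMap a b) ∘ₗ L2) := rfl

lemma continuousAt_conjC (L1 L2 : M2 →ₗ[ℝ] M2) {a b : ℝ → M2}
    (ha : ContinuousAt a 0) (hb : ContinuousAt b 0) :
    ContinuousAt (fun t => conjC L1 L2 (a t) (b t)) 0 := by
  have h1 : Continuous (fun p : M2 × M2 => conjL1 L1 L2 p.1 p.2) := by
    have hs : (fun p : M2 × M2 => conjL1 L1 L2 p.1 p.2) = fun p => ∑ i, ∑ j,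
        p.1 i j • conjL1 L1 L2 (Matrix.single i j 1) p.2 := by
      funext p
      conv_lhs => rw [Matrix.matrix_eq_sum_single p.1]
      simp only [map_sum, ContinuousLinearMap.sum_apply]
      refine Finset.sum_congr rfl (fun i _ => Finset.sum_congr rfl (fun j _ => ?_))
      rw [← ContinuousLinearMap.smul_apply, ← map_smul, Matrix.smul_single, smul_eq_mul, mul_one]
    rw [hs]
    refine continuous_finset_sum _ (fun i _ => continuous_finset_sum _ (fun j _ => ?_))
    exact (continuous_fst.matrix_elem i j).smul
      ((conjL1 L1 L2 (Matrix.single i j 1)).continuous.comp continuous_snd)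
  exact (h1.continuousAt.comp (ha.prodMk hb) : _)

def sR : M2 →ₗ[ℝ] E2 where
  toFun m := LinearMap.toContinuousLinearMap
    (LinearMap.smulRight ((1 / 2 : ℝ) • Matrix.traceLinearMap (Fin 2) ℝ ℝ) m)
  map_add' m m' := by
    ext M
    simp only [LinearMap.smulRight_apply, ContinuousLinearMap.add_apply,
      LinearMap.coe_toContinuousLinearMap']
    simp [mul_add]
  map_smul' s m := by
    ext M
    simp only [LinearMap.smulRight_apply, ContinuousLinearMap.coe_smul', Pi.smul_apply,
      LinearMap.coe_toContinuousLinearMap', RingHom.id_apply]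
    simp [smul_smul]
    ring

def mulL1 : M2 →ₗ[ℝ] (M2 →L[ℝ] M2) where
  toFun a := (LinearMap.mulLeft ℝ a).toContinuousLinearMap
  map_add' a a' := by ext b; simp [add_mul]
  map_smul' s a := by ext b; simp [Matrix.smul_mul]

lemma diffAt_matmul {a b : ℝ → M2} (ha : DifferentiableAt ℝ a 0)
    (hb : DifferentiableAt ℝ b 0) : DifferentiableAt ℝ (fun t => a t * b t) 0 := by
  have he : ∀ (c : ℝ → M2), DifferentiableAt ℝ c 0 → ∀ i j : Fin 2,
      DifferentiableAt ℝ (fun t => c t i j) 0 := fun c hc i j =>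
    ((entryLM i j).toContinuousLinearMap.hasFDerivAt.comp_hasDerivAt 0 hc.hasDerivAt).differentiableAt
  apply differentiableAt_pi.mpr
  intro i
  apply differentiableAt_pi.mpr
  intro j
  simp only [Matrix.mul_apply, Fin.sum_univ_two]
  exact ((he a ha i 0).mul (he b hb 0 j)).add ((he a ha i 1).mul (he b hb 1 j))

/-- Proposition 7.1.(2), rescaled limit of anti-de Sitter isometries: if
`h, k : ℝ → SL₂(ℝ)` are differentiable at `0` with `h(0) = k(0)` and
`u = (d/dt)|₀ (k·h⁻¹)`, then the rescaled conjugated maps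
`M ↦ r̂_t(k(t)·r̂_t⁻¹(M)·h(t)⁻¹)` converge in norm, as `t → 0⁺`, to
`M ↦ h(0)·(M − (tr M/2)·I)·h(0)⁻¹ + (tr M/2)·(I + u)`. -/
theorem statement19 (h k : ℝ → M2)
    (hdet : ∀ t, (h t).det = 1) (kdet : ∀ t, (k t).det = 1)
    (hdiff : DifferentiableAt ℝ h 0) (kdiff : DifferentiableAt ℝ k 0)
    (h0k0 : h 0 = k 0)
    (u : M2) (hu : u = deriv (fun t => k t * (h t)⁻¹) 0) :
    Filter.Tendsto
      (fun t : ℝ => LinearMap.toContinuousLinearMap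
        ((rhat t).comp ((conjMap (k t) (h t)⁻¹).comp (rhatInv t))))
      (nhdsWithin 0 (Set.Ioi 0))
      (nhds (LinearMap.toContinuousLinearMap
        ((conjMap (h 0) (h 0)⁻¹).comp (LinearMap.id - trHalf) +
          LinearMap.smulRight ((1 / 2 : ℝ) • Matrix.traceLinearMap (Fin 2) ℝ ℝ) (1 + u)))) := by
  have hdet0 : IsUnit (h 0).det := by rw [hdet]; exact isUnit_one
  have hinv : ∀ t, (h t)⁻¹ = adjLM (h t) := fun t => by
    rw [Matrix.inv_def, hdet, Ring.inverse_one, one_smul, adjLM_eq]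
  set f : ℝ → M2 := fun t => k t * (h t)⁻¹ with hfdef
  have hbdiff : DifferentiableAt ℝ (fun t => (h t)⁻¹) 0 := by
    simp only [hinv]
    exact (adjLM.toContinuousLinearMap.differentiableAt).comp 0 hdiff
  have hfdiff : DifferentiableAt ℝ f 0 := diffAt_matmul kdiff hbdiff
  have hfu : HasDerivAt f u 0 := by rw [hu]; exact hfdiff.hasDerivAt
  have hf0 : f 0 = 1 := by
    show k 0 * (h 0)⁻¹ = 1
    rw [← h0k0, Matrix.mul_nonsing_inv _ hdet0]
  have htru : u.trace = 0 := by
    have hDk : (fun t => (f t).det) = fun _ => (1 : ℝ) := by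
      funext t
      show (k t * (h t)⁻¹).det = 1
      rw [Matrix.det_mul, kdet, Matrix.det_nonsing_inv, hdet, Ring.inverse_one, one_mul]
    have he : ∀ i j : Fin 2, HasDerivAt (fun t => f t i j) (u i j) 0 := fun i j =>
      ((entryLM i j).toContinuousLinearMap.hasFDerivAt).comp_hasDerivAt 0 hfu
    have hD : HasDerivAt (fun t => (f t).det)
        (u 0 0 * f 0 1 1 + f 0 0 0 * u 1 1 - (u 0 1 * f 0 1 0 + f 0 0 1 * u 1 0)) 0 := by
      simp only [Matrix.det_fin_two]
      exact ((he 0 0).mul (he 1 1)).sub ((he 0 1).mul (he 1 0))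
    rw [hDk] at hD
    have h0 := (hasDerivAt_const (0:ℝ) (1 : ℝ)).unique hD
    rw [hf0] at h0
    simp only [Matrix.one_apply] at h0
    norm_num at h0
    rw [Matrix.trace_fin_two]
    linarith [h0]
  set Pl : M2 →ₗ[ℝ] M2 := LinearMap.id - trHalf with hPl
  have key : Set.EqOn
      (fun t : ℝ => LinearMap.toContinuousLinearMap
        ((rhat t).comp ((conjMap (k t) (h t)⁻¹).comp (rhatInv t))))
      (fun t : ℝ => conjC Pl Pl (k t) ((h t)⁻¹) + t • conjC trHalf Pl (k t) ((h t)⁻¹)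
        + sR (Pl (t⁻¹ • (f t - 1)) + trHalf (f t)))
      (Set.Ioi 0) := by
    intro t ht
    have ht' : (t : ℝ) ≠ 0 := ne_of_gt ht
    ext M : 1
    simp only [conjC_apply, conjL2, conjL1, sR, rhat, rhatInv, conjMap, trHalf, hPl,
      hfdef, LinearMap.coe_toContinuousLinearMap', ContinuousLinearMap.add_apply,
      ContinuousLinearMap.coe_smul', Pi.smul_apply, LinearMap.coe_mk, AddHom.coe_mk,
      LinearMap.coe_comp, Function.comp_apply, LinearMap.add_apply, LinearMap.sub_apply,
      LinearMap.smul_apply, LinearMap.id_coe, id_eq, LinearMap.smulRight_apply,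
      LinearMap.mulLeft_apply, LinearMap.mulRight_apply,
      Matrix.traceLinearMap_apply, smul_eq_mul, mul_add, add_mul, Matrix.mul_smul,
      Matrix.smul_mul, Matrix.trace_add, Matrix.trace_sub, Matrix.trace_smul,
      Matrix.trace_one, mul_one, one_mul, map_add, map_sub, map_smul, smul_smul,
      inv_mul_cancel₀ ht', Matrix.mul_one, Matrix.one_mul, sub_zero, smul_sub,
      ContinuousLinearMap.coe_sub', Pi.sub_apply, ContinuousLinearMap.sub_apply,
      Fintype.card_fin, Nat.cast_ofNat]
    match_scalars <;> field_simp <;> ring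
  rw [Filter.tendsto_congr' (Filter.eventuallyEq_of_mem self_mem_nhdsWithin key)]
  have hbcont : ContinuousAt (fun t => (h t)⁻¹) 0 := hbdiff.continuousAt
  have T1 : Filter.Tendsto (fun t => conjC Pl Pl (k t) ((h t)⁻¹)) (nhdsWithin 0 (Set.Ioi 0))
      (nhds (conjC Pl Pl (k 0) ((h 0)⁻¹))) :=
    (continuousAt_conjC Pl Pl kdiff.continuousAt hbcont).continuousWithinAt
  have T2 : Filter.Tendsto (fun t : ℝ => t • conjC trHalf Pl (k t) ((h t)⁻¹))
      (nhdsWithin 0 (Set.Ioi 0)) (nhds 0) := by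
    have := (Filter.tendsto_id.mono_left nhdsWithin_le_nhds).smul
      ((continuousAt_conjC trHalf Pl kdiff.continuousAt hbcont).continuousWithinAt
        (s := Set.Ioi 0))
    simpa using this
  have hslope : Filter.Tendsto (fun t : ℝ => t⁻¹ • (f t - 1)) (nhdsWithin 0 (Set.Ioi 0))
      (nhds u) := by
    have hs := hasDerivAt_iff_tendsto_slope.mp hfu
    have heq : (fun t : ℝ => t⁻¹ • (f t - 1)) = slope f 0 := by
      funext t
      rw [slope_def_module, hf0, sub_zero]
    rw [heq]
    exact hs.mono_left (nhdsWithin_mono 0 (fun x hx => Set.mem_compl_singleton_iff.mpr hx.ne'))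
  have T3 : Filter.Tendsto (fun t : ℝ => sR (Pl (t⁻¹ • (f t - 1)) + trHalf (f t)))
      (nhdsWithin 0 (Set.Ioi 0)) (nhds (sR (Pl u + trHalf (f 0)))) := by
    apply (sR.continuous_of_finiteDimensional.tendsto _).comp
    apply Filter.Tendsto.add
    · exact (Pl.continuous_of_finiteDimensional.tendsto _).comp hslope
    · exact ((trHalf.continuous_of_finiteDimensional.continuousAt.comp
        hfdiff.continuousAt).continuousWithinAt)
  have Tall := (T1.add T2).add T3
  rw [add_zero] at Tall
  have hPlu : Pl u = u := by
    simp [hPl, trHalf, htru]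
  have htrHalf1 : trHalf (f 0) = 1 := by
    rw [hf0]
    simp [trHalf, Matrix.trace_one]
  have hfin : LinearMap.toContinuousLinearMap
        ((conjMap (h 0) (h 0)⁻¹).comp (LinearMap.id - trHalf) +
          LinearMap.smulRight ((1 / 2 : ℝ) • Matrix.traceLinearMap (Fin 2) ℝ ℝ) (1 + u))
      = conjC Pl Pl (k 0) ((h 0)⁻¹) + sR (Pl u + trHalf (f 0)) := by
    rw [hPlu, htrHalf1, ← h0k0, ← hPl]
    ext M : 1
    have htrPl : (Pl M).trace = 0 := by
      simp [hPl, trHalf, Matrix.trace_sub, Matrix.trace_smul, Matrix.trace_one]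
      ring
    have htr0 : (h 0 * ((Pl M) * (h 0)⁻¹)).trace = 0 := by
      rw [← Matrix.mul_assoc, Matrix.trace_mul_comm, ← Matrix.mul_assoc,
        Matrix.nonsing_inv_mul _ hdet0, Matrix.one_mul, htrPl]
    have hQ0 : trHalf ((conjMap (h 0) (h 0)⁻¹) (Pl M)) = 0 := by
      have : (conjMap (h 0) (h 0)⁻¹) (Pl M) = h 0 * ((Pl M) * (h 0)⁻¹) := rfl
      rw [this]
      simp [trHalf, htr0]
    have hPlX : Pl ((conjMap (h 0) (h 0)⁻¹) (Pl M)) = (conjMap (h 0) (h 0)⁻¹) (Pl M) := by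
      have : Pl ((conjMap (h 0) (h 0)⁻¹) (Pl M))
          = (conjMap (h 0) (h 0)⁻¹) (Pl M) - trHalf ((conjMap (h 0) (h 0)⁻¹) (Pl M)) := rfl
      rw [this, hQ0, sub_zero]
    show (conjMap (h 0) (h 0)⁻¹) (Pl M) + ((1/2 : ℝ) * Matrix.trace M) • (1 + u)
        = Pl ((conjMap (h 0) (h 0)⁻¹) (Pl M)) + ((1/2 : ℝ) * Matrix.trace M) • (u + 1)
    rw [hPlX, add_comm u 1]
  rw [hfin]
  exact Tall
end
end
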